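/- arXiv:2508.12826 — 6 statements merged into one kernel-verified Lean document; each statement's English description precedes it below -/
import Mathlib

section
/- Let G be a graph on n vertices with minimum degree δ(G) ≥ 5n/9, let u_0v_0 be an edge of G, let k ≥ 2 be an integer, and let R ⊆ V(G) \ {u_0, v_0} be a set of vertices with |R| + 2k + 1 ≤ n/9. Then the graph G − R contains a cycle of length 2k+1 passing through the edge u_0v_0. -/
open SimpleGraph

/-- The join `G ∇ H` of two graphs: disjoint union together with all cross edges. -/
def graphJoin {α β : Type} (G : SimpleGraph α) (H : SimpleGraph β) :
    SimpleGraph (α ⊕ β) :=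
  SimpleGraph.fromRel (fun x y =>
    (∃ a b, x = Sum.inl a ∧ y = Sum.inr b) ∨
    (∃ a b, x = Sum.inl a ∧ y = Sum.inl b ∧ G.Adj a b) ∨
    (∃ a b, x = Sum.inr a ∧ y = Sum.inr b ∧ H.Adj a b))

/-- The disjoint union `G ∪ H` of two graphs. -/
def graphDisjUnion {α β : Type} (G : SimpleGraph α) (H : SimpleGraph β) :
    SimpleGraph (α ⊕ β) :=
  SimpleGraph.fromRel (fun x y =>
    (∃ a b, x = Sum.inl a ∧ y = Sum.inl b ∧ G.Adj a b) ∨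
    (∃ a b, x = Sum.inr a ∧ y = Sum.inr b ∧ H.Adj a b))

/-- The matching `M_m` consisting of `m` pairwise disjoint edges. -/
def matchingGraph (m : ℕ) : SimpleGraph (Fin (2 * m)) :=
  SimpleGraph.fromRel (fun x y => (x : ℕ) / 2 = (y : ℕ) / 2)

/-- The star `S_m` on `m` vertices, with centre `0`. -/
def starGraph (m : ℕ) : SimpleGraph (Fin m) :=
  SimpleGraph.fromRel (fun x _ => (x : ℕ) = 0)

/-- `G` contains a (not necessarily induced) copy of `H` as a subgraph. -/
def ContainsCopy {α β : Type} (H : SimpleGraph α) (G : SimpleGraph β) : Prop :=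
  ∃ f : α ↪ β, ∀ ⦃a b : α⦄, H.Adj a b → G.Adj (f a) (f b)

/-- `G` is `H`-free: it contains no subgraph isomorphic to `H`. -/
def IsFreeOf {α β : Type} (H : SimpleGraph α) (G : SimpleGraph β) : Prop :=
  ¬ ContainsCopy H G

/-- The number of edges of a graph. -/
noncomputable def eCount {α : Type} (G : SimpleGraph α) : ℕ :=
  Nat.card G.edgeSet

/-- `G ∈ EX(n, H)`: `G` is an `n`-vertex `H`-free graph with the maximum possible
number of edges among all `n`-vertex `H`-free graphs. -/
def IsExtremalFree {α : Type} (H : SimpleGraph α) (n : ℕ) (G : SimpleGraph (Fin n)) : Prop :=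
  IsFreeOf H G ∧ ∀ G' : SimpleGraph (Fin n), IsFreeOf H G' → eCount G' ≤ eCount G

/-- The Turán number `ex(n, H)`. -/
noncomputable def exNum {α : Type} (n : ℕ) (H : SimpleGraph α) : ℕ :=
  sSup {m | ∃ G : SimpleGraph (Fin n), IsFreeOf H G ∧ eCount G = m}

/-- `Fo` is an odd-ballooning of `F` in which every substituted odd cycle has length
at least five: every edge `uv` of `F` is replaced by an odd cycle through `u` and `v`
(consisting of the edge `f u f v` together with a path of even length at least four
joining `f v` to `f u`), all new vertices of different substituted cycles being distinct. -/
def IsOddBallooning {α β : Type} (F : SimpleGraph α) (Fo : SimpleGraph β) : Prop :=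
  ∃ (f : α ↪ β) (P : ∀ u v : α, F.Adj u v → Fo.Walk (f v) (f u)),
    (∀ u v : α, F.Adj u v → Fo.Adj (f u) (f v)) ∧
    (∀ u v : α, ∀ h : F.Adj u v, (P u v h).IsPath) ∧
    (∀ u v : α, ∀ h : F.Adj u v, 4 ≤ (P u v h).length ∧ Even (P u v h).length) ∧
    (∀ u v : α, ∀ h : F.Adj u v, P v u h.symm = (P u v h).reverse) ∧
    (∀ u v : α, ∀ h : F.Adj u v, ∀ b : β, b ∈ (P u v h).support →
      b = f u ∨ b = f v ∨ b ∉ Set.range f) ∧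
    (∀ u v u' v' : α, ∀ h : F.Adj u v, ∀ h' : F.Adj u' v', s(u, v) ≠ s(u', v') →
      ∀ b : β, b ∈ (P u v h).support → b ∈ (P u' v' h').support → b ∈ Set.range f) ∧
    (∀ b : β, b ∈ Set.range f ∨ ∃ u v : α, ∃ h : F.Adj u v, b ∈ (P u v h).support) ∧
    (∀ e ∈ Fo.edgeSet, (∃ u v : α, ∃ _ : F.Adj u v, e = s(f u, f v)) ∨
      ∃ u v : α, ∃ h : F.Adj u v, e ∈ (P u v h).edges)

/-- The connected component `C` of `F` is an even cycle (of length at least four). -/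
def IsEvenCycleComp {α : Type} (F : SimpleGraph α) (C : F.ConnectedComponent) : Prop :=
  ∃ m : ℕ, 2 ≤ m ∧ Nonempty ((F.induce C.supp) ≃g cycleGraph (2 * m))

/-- Every connected component of `F` is either a non-trivial tree or an even cycle. -/
def GoodComponents {α : Type} (F : SimpleGraph α) : Prop :=
  ∀ C : F.ConnectedComponent,
    ((F.induce C.supp).IsTree ∧ 2 ≤ Nat.card C.supp) ∨ IsEvenCycleComp F C
/-- `M` (together with `E_t`) joined to a Turán graph contains `H`:
the defining property of members of the decomposition family `𝓜(H)`
of a graph `H` with chromatic number `r + 1`. -/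
def DecompProp {γ δ : Type} (H : SimpleGraph γ) (r : ℕ) (M : SimpleGraph δ) : Prop :=
  ∃ t : ℕ, ContainsCopy H
    (graphJoin (graphDisjUnion M (⊥ : SimpleGraph (Fin t)))
      (SimpleGraph.turanGraph ((r - 1) * t) (r - 1)))

/-- `M` is a member of the decomposition family `𝓜(H)` (for `H` of chromatic number
`r + 1`): it is minimal with respect to the subgraph relation such that
`H ⊆ (M ∪ E_t) ∇ T_{(r-1)t, r-1}` for some `t`.  (Minimality with respect to the
subgraph relation amounts to edge-minimality together with the absence of isolated
vertices.) -/
def IsMinimalDecomp {γ δ : Type} (H : SimpleGraph γ) (r : ℕ) (M : SimpleGraph δ) : Prop :=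
  DecompProp H r M ∧
  (∀ M' : SimpleGraph δ, M' ≤ M → M' ≠ M → ¬ DecompProp H r M') ∧
  (∀ v : δ, ∃ w : δ, M.Adj v w)

/-- `G` is `𝓜(H)`-free, where `𝓜(H)` is the decomposition family of `H`. -/
def DecompFree {γ : Type} (H : SimpleGraph γ) (r : ℕ) {n : ℕ} (G : SimpleGraph (Fin n)) : Prop :=
  ∀ (m : ℕ) (M : SimpleGraph (Fin m)), IsMinimalDecomp H r M → IsFreeOf M G

/-- `G ∈ EX(n, 𝓜(H))`. -/
def IsExtremalDecompFree {γ : Type} (H : SimpleGraph γ) (r n : ℕ)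
    (G : SimpleGraph (Fin n)) : Prop :=
  DecompFree H r G ∧ ∀ G' : SimpleGraph (Fin n), DecompFree H r G' → eCount G' ≤ eCount G

/-- The vertex type of the graph obtained from `F` by cracking all vertices of `U`:
the old vertices outside `U`, a vertex `u_v` for every pair `(u, v)` with `u ∈ U`
and `v` a neighbour of `u`, and a new vertex `w_{u,v}` for every such pair of
Type II (i.e. with `¬ T (u, v)`). -/
abbrev CrackVert {α : Type} (F : SimpleGraph α) (U : Set α) (T : α × α → Prop) : Type :=
  {a : α // a ∉ U} ⊕
    ({p : α × α // p.1 ∈ U ∧ F.Adj p.1 p.2} ⊕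
      {p : α × α // (p.1 ∈ U ∧ F.Adj p.1 p.2) ∧ ¬ T p})

/-- The graph obtained from `F` by cracking all vertices of the independent set `U`,
where each cracked edge `u v` (`u ∈ U`) is of Type I if `T (u, v)` holds (then `u_v`
is joined to `v`) and of Type II otherwise (then `u_v` is joined to the new vertex
`w_{u,v}`). -/
def crackedGraph {α : Type} (F : SimpleGraph α) (U : Set α) (T : α × α → Prop) :
    SimpleGraph (CrackVert F U T) :=
  SimpleGraph.fromRel (fun x y =>
    match x, y with
    | Sum.inl a, Sum.inl b => F.Adj a.val b.val
    | Sum.inl a, Sum.inr (Sum.inl p) => T p.val ∧ p.val.2 = a.val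
    | Sum.inr (Sum.inl p), Sum.inr (Sum.inr q) => p.val = q.val
    | _, _ => False)

/-- `M` is a member of the cracking family `𝓒(F)`: it is obtained from `F` by
cracking all vertices of some independent set `U` of `F`. -/
def InCrackingFamily {α δ : Type} (F : SimpleGraph α) (M : SimpleGraph δ) : Prop :=
  ∃ (U : Set α) (T : α × α → Prop),
    (∀ u ∈ U, ∀ v ∈ U, ¬ F.Adj u v) ∧ Nonempty (M ≃g crackedGraph F U T)

/-- The matching number of `G` is at most `ν`. -/
def MatchingNumberLE {V : Type} (G : SimpleGraph V) (ν : ℕ) : Prop :=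
  ∀ s : Finset (Sym2 V), (∀ e ∈ s, e ∈ G.edgeSet) →
    (∀ e ∈ s, ∀ e' ∈ s, e ≠ e' → ∀ x : V, x ∈ e → x ∉ e') → s.card ≤ ν

/-- The maximum degree of `G` is at most `Δ`. -/
def MaxDegreeLE {V : Type} (G : SimpleGraph V) (Δ : ℕ) : Prop :=
  ∀ v : V, Nat.card (G.neighborSet v) ≤ Δ

/-- `f(ν, Δ)`: the maximum number of edges of a finite graph with matching number
at most `ν` and maximum degree at most `Δ`. -/
noncomputable def fNuDelta (ν Δ : ℕ) : ℕ :=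
  sSup {m | ∃ (k : ℕ) (G : SimpleGraph (Fin k)),
    MatchingNumberLE G ν ∧ MaxDegreeLE G Δ ∧ eCount G = m}

/-- The number of edges of `G` joining distinct parts of the partition `c`. -/
noncomputable def crossCount {n r : ℕ} (G : SimpleGraph (Fin n)) (c : Fin n → Fin r) : ℕ :=
  Nat.card {e : Sym2 (Fin n) // e ∈ G.edgeSet ∧ ∃ x ∈ e, ∃ y ∈ e, c x ≠ c y}

/-- The number of edges of `G` inside part `i` of the partition `c`. -/
noncomputable def insideCount {n r : ℕ} (G : SimpleGraph (Fin n)) (c : Fin n → Fin r)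
    (i : Fin r) : ℕ :=
  Nat.card {e : Sym2 (Fin n) // e ∈ G.edgeSet ∧ ∀ x ∈ e, c x = i}

/-- `d_{V_i}(w)`: the number of neighbours of `w` in part `i` of the partition `c`. -/
noncomputable def degIn {n r : ℕ} (G : SimpleGraph (Fin n)) (c : Fin n → Fin r)
    (i : Fin r) (w : Fin n) : ℕ :=
  Nat.card {y : Fin n // c y = i ∧ G.Adj w y}

/-- The degree of `v` in `G`. -/
noncomputable def degAll {n : ℕ} (G : SimpleGraph (Fin n)) (v : Fin n) : ℕ :=
  Nat.card (G.neighborSet v)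

namespace Stmt6Aux

variable {V : Type} (G : SimpleGraph V)

def buildWalk : (l : List V) → (a b : V) → List.Chain G.Adj a (l ++ [b]) → G.Walk a b
  | [], _, _, h => Walk.cons (List.chain_cons.mp h).1 Walk.nil
  | x :: xs, _, b, h =>
    Walk.cons (List.chain_cons.mp h).1 (buildWalk xs x b (List.chain_cons.mp h).2)

lemma support_buildWalk : ∀ (l : List V) (a b : V) (h : List.Chain G.Adj a (l ++ [b])),
    (buildWalk G l a b h).support = a :: (l ++ [b])
  | [], a, b, h => by simp [buildWalk]
  | x :: xs, a, b, h => by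
    simp [buildWalk, support_buildWalk xs x b _]
    exact support_buildWalk xs x b _

lemma length_buildWalk : ∀ (l : List V) (a b : V) (h : List.Chain G.Adj a (l ++ [b])),
    (buildWalk G l a b h).length = l.length + 1
  | [], a, b, h => by simp [buildWalk]
  | x :: xs, a, b, h => by
    simp [buildWalk, length_buildWalk xs x b _]
    exact length_buildWalk xs x b _

lemma edge_not_mem : ∀ (l : List V) (a b : V) (h : List.Chain G.Adj a (l ++ [b]))
    (u v : V), u ≠ a → u ∉ l → v ∉ l → v ≠ b → (l = [] → v ≠ a) →
    s(u, v) ∉ (buildWalk G l a b h).edges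
  | [], a, b, h, u, v, hua, hul, hvl, hvb, hva => by
    simp only [buildWalk, Walk.edges_cons, Walk.edges_nil, List.mem_singleton]
    intro he
    rw [Sym2.eq_iff] at he
    rcases he with ⟨h1, h2⟩ | ⟨h1, h2⟩
    · exact hvb h2
    · exact hva rfl h2
  | x :: xs, a, b, h, u, v, hua, hul, hvl, hvb, hva => by
    simp only [buildWalk, Walk.edges_cons, List.mem_cons]
    rintro (he | he)
    · rw [Sym2.eq_iff] at he
      rcases he with ⟨h1, h2⟩ | ⟨h1, h2⟩
      · exact hua h1
      · exact hul (h1 ▸ (List.mem_cons_self : x ∈ x :: xs))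
    · refine edge_not_mem xs x b _ u v ?_ ?_ ?_ hvb ?_ he
      · intro hh; exact hul (hh ▸ (List.mem_cons_self : x ∈ x :: xs))
      · intro hh; exact hul (List.mem_cons_of_mem x hh)
      · intro hh; exact hvl (List.mem_cons_of_mem x hh)
      · intro _ hh; exact hvl (hh ▸ (List.mem_cons_self : x ∈ x :: xs))

end Stmt6Aux

/-- Claim 4.1.  Let `G` be a graph on `n` vertices with minimum degree
at least `5n/9`, let `u₀v₀` be an edge of `G`, let `k ≥ 2`, and let `R` be a set of
vertices avoiding `u₀` and `v₀` with `|R| + 2k + 1 ≤ n/9`.  Then `G - R` contains a cycle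
of length `2k + 1` passing through the edge `u₀v₀`. -/
theorem stmt_6 {n : ℕ} (G : SimpleGraph (Fin n))
    (hδ : ∀ v : Fin n, (5 * n : ℝ) / 9 ≤ (Nat.card (G.neighborSet v) : ℝ))
    (u₀ v₀ : Fin n) (huv : G.Adj u₀ v₀)
    (k : ℕ) (hk : 2 ≤ k)
    (R : Finset (Fin n)) (hu₀ : u₀ ∉ R) (hv₀ : v₀ ∉ R)
    (hR : (R.card : ℝ) + 2 * k + 1 ≤ (n : ℝ) / 9) :
    ∃ c : G.Walk u₀ u₀, c.IsCycle ∧ c.length = 2 * k + 1 ∧ s(u₀, v₀) ∈ c.edges ∧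
      ∀ x ∈ c.support, x ∉ R := by
  classical
  set N : Fin n → Finset (Fin n) := fun v => Finset.univ.filter (fun w => G.Adj v w) with hN
  have hNcard : ∀ v : Fin n, (5 * n : ℝ) / 9 ≤ ((N v).card : ℝ) := by
    intro v
    have h1 : Nat.card (G.neighborSet v) = (N v).card := by
      rw [Nat.card_coe_set_eq, Set.ncard_eq_toFinset_card']
      congr 1
      ext w
      simp [hN, SimpleGraph.mem_neighborSet]
    have := hδ v
    rw [h1] at this
    exact this
  have hNmem : ∀ v w : Fin n, w ∈ N v ↔ G.Adj v w := by
    intro v w; simp [hN]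
  have step : ∀ (v : Fin n) (S : Finset (Fin n)), S.card ≤ R.card + 2 * k →
      ∃ w, G.Adj v w ∧ w ∉ S := by
    intro v S hS
    have hlt : S.card < (N v).card := by
      have h1 : ((S.card : ℝ)) < 5 * n / 9 := by
        have h2 : (S.card : ℝ) ≤ (R.card : ℝ) + 2 * k := by exact_mod_cast hS
        have h3 : (0 : ℝ) ≤ n := by positivity
        linarith
      have := hNcard v
      exact_mod_cast h1.trans_le this
    have hne : (N v \ S).Nonempty := by
      rw [← Finset.card_pos]
      have := Finset.le_card_sdiff S (N v)
      omega
    obtain ⟨w, hw⟩ := hne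
    rw [Finset.mem_sdiff, hNmem] at hw
    exact ⟨w, hw.1, hw.2⟩
  have step2 : ∀ (a b : Fin n) (S : Finset (Fin n)), S.card ≤ R.card + 2 * k →
      ∃ w, G.Adj a w ∧ G.Adj b w ∧ w ∉ S := by
    intro a b S hS
    have hunion : (N a ∪ N b).card ≤ n := by
      have := Finset.card_le_univ (N a ∪ N b)
      simpa using this
    have hlt : S.card < (N a ∩ N b).card := by
      have ha := hNcard a
      have hb := hNcard b
      have hS' : (S.card : ℝ) ≤ (R.card : ℝ) + 2 * k := by exact_mod_cast hS
      have h9 : ((N a).card : ℝ) + ((N b).card : ℝ) - n ≤ ((N a ∩ N b).card : ℝ) := by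
        have h2 : ((N a ∪ N b).card : ℝ) ≤ n := by exact_mod_cast hunion
        have h3 : ((N a ∩ N b).card : ℝ) + ((N a ∪ N b).card : ℝ)
            = ((N a).card : ℝ) + ((N b).card : ℝ) := by
          exact_mod_cast Finset.card_inter_add_card_union (N a) (N b)
        linarith
      have : (S.card : ℝ) < ((N a ∩ N b).card : ℝ) := by linarith
      exact_mod_cast this
    have hne : ((N a ∩ N b) \ S).Nonempty := by
      rw [← Finset.card_pos]
      have := Finset.le_card_sdiff S (N a ∩ N b)
      omega
    obtain ⟨w, hw⟩ := hne
    rw [Finset.mem_sdiff, Finset.mem_inter, hNmem, hNmem] at hw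
    exact ⟨w, hw.1.1, hw.1.2, hw.2⟩
  -- greedy chain, built in reverse, ending at v₀
  have key : ∀ m : ℕ, m + 3 ≤ 2 * k → ∃ (c : Fin n) (l : List (Fin n)), l.length = m ∧
      List.Chain G.Adj c (l ++ [v₀]) ∧ (u₀ :: c :: (l ++ [v₀])).Nodup ∧
      ∀ x ∈ c :: l, x ∉ R := by
    intro m
    induction m with
    | zero =>
      intro _
      obtain ⟨c, hadj, hc⟩ := step v₀ (insert u₀ (insert v₀ R)) (by
        calc (insert u₀ (insert v₀ R)).card ≤ (insert v₀ R).card + 1 :=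
              Finset.card_insert_le _ _
          _ ≤ R.card + 1 + 1 := by
              have := Finset.card_insert_le v₀ R; omega
          _ ≤ R.card + 2 * k := by omega)
      simp only [Finset.mem_insert, not_or] at hc
      obtain ⟨h1, h2, h3⟩ := hc
      refine ⟨c, [], rfl, List.chain_cons.mpr ⟨hadj.symm, List.Chain.nil⟩, ?_, ?_⟩
      · have e1 : u₀ ≠ c := Ne.symm h1
        have e2 : c ≠ v₀ := h2
        have e3 : u₀ ≠ v₀ := huv.ne
        simp [List.nodup_cons, e1, e2, e3]
      · intro x hx
        simp only [List.mem_cons, List.not_mem_nil, or_false] at hx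
        subst hx
        exact h3
    | succ m ih =>
      intro hm
      obtain ⟨c, l, hlen, hch, hnd, hRl⟩ := ih (by omega)
      obtain ⟨c', hadj, hc'⟩ := step c (insert u₀ (insert v₀ (R ∪ (c :: l).toFinset))) (by
        calc (insert u₀ (insert v₀ (R ∪ (c :: l).toFinset))).card
            ≤ (R ∪ (c :: l).toFinset).card + 2 := by
              have h1 := Finset.card_insert_le u₀ (insert v₀ (R ∪ (c :: l).toFinset))
              have h2 := Finset.card_insert_le v₀ (R ∪ (c :: l).toFinset)
              omega
          _ ≤ R.card + (m + 1) + 2 := by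
              have h1 := Finset.card_union_le R (c :: l).toFinset
              have h2 := List.toFinset_card_le (c :: l)
              simp only [List.length_cons, hlen] at h2
              omega
          _ ≤ R.card + 2 * k := by omega)
      simp only [Finset.mem_insert, Finset.mem_union, List.mem_toFinset, List.mem_cons,
        not_or] at hc'
      obtain ⟨hcu, hcv, hcR, hcc, hcl⟩ := hc'
      have e1 : u₀ ≠ c' := Ne.symm hcu
      have e2 : c' ≠ v₀ := hcv
      have e3 : c' ≠ c := hcc
      refine ⟨c', c :: l, by simp [hlen], List.chain_cons.mpr ⟨hadj.symm, hch⟩, ?_, ?_⟩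
      · simp only [List.cons_append, List.nodup_cons, List.mem_cons, List.mem_append,
          List.mem_singleton, not_or] at hnd ⊢
        refine ⟨⟨e1, hnd.1.1, hnd.1.2.1, hnd.1.2.2⟩, ⟨e3, fun hh => hcl hh, e2, List.not_mem_nil⟩,
          hnd.2.1, hnd.2.2⟩
      · intro x hx
        simp only [List.mem_cons] at hx
        rcases hx with rfl | rfl | hx
        · exact hcR
        · exact hRl _ (List.mem_cons_self)
        · exact hRl _ (List.mem_cons_of_mem _ hx)
  obtain ⟨c, l, hlen, hch, hnd, hRl⟩ := key (2 * k - 3) (by omega)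
  obtain ⟨w, hwc, hwu, hw⟩ := step2 c u₀ (insert u₀ (insert v₀ (R ∪ (c :: l).toFinset))) (by
    calc (insert u₀ (insert v₀ (R ∪ (c :: l).toFinset))).card
        ≤ (R ∪ (c :: l).toFinset).card + 2 := by
          have h1 := Finset.card_insert_le u₀ (insert v₀ (R ∪ (c :: l).toFinset))
          have h2 := Finset.card_insert_le v₀ (R ∪ (c :: l).toFinset)
          omega
      _ ≤ R.card + (2 * k - 3 + 1) + 2 := by
          have h1 := Finset.card_union_le R (c :: l).toFinset
          have h2 := List.toFinset_card_le (c :: l)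
          simp only [List.length_cons, hlen] at h2
          omega
      _ ≤ R.card + 2 * k := by omega)
  simp only [Finset.mem_insert, Finset.mem_union, List.mem_toFinset, List.mem_cons,
    not_or] at hw
  obtain ⟨hwu₀, hwv₀, hwR, hwcne, hwl⟩ := hw
  set M : List (Fin n) := w :: c :: l with hM
  have hMchain : List.Chain G.Adj u₀ (M ++ [v₀]) :=
    List.chain_cons.mpr ⟨hwu, List.chain_cons.mpr ⟨hwc.symm, hch⟩⟩
  have hMnodup : (u₀ :: (M ++ [v₀])).Nodup := by
    have e1 : u₀ ≠ w := Ne.symm hwu₀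
    have e2 : w ≠ v₀ := hwv₀
    have e3 : w ≠ c := hwcne
    simp only [hM, List.cons_append, List.nodup_cons, List.mem_cons, List.mem_append,
      List.mem_singleton, not_or] at hnd ⊢
    exact ⟨⟨e1, hnd.1.1, hnd.1.2.1, hnd.1.2.2⟩, ⟨e3, fun hh => hwl hh, e2, List.not_mem_nil⟩,
      hnd.2.1, hnd.2.2⟩
  have hnd2 := hMnodup
  rw [List.nodup_cons] at hnd2
  have hu₀M : u₀ ∉ M := fun hh => hnd2.1 (List.mem_append_left _ hh)
  have hv₀M : v₀ ∉ M := by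
    have h := hnd2.2
    rw [List.nodup_append] at h
    exact fun hh => h.2.2 _ hh _ (List.mem_singleton_self _) rfl
  set L : List (Fin n) := M.reverse with hL
  have hrev : (u₀ :: (M ++ [v₀])).reverse = v₀ :: (L ++ [u₀]) := by
    simp [hL]
  have hLchain : List.Chain G.Adj v₀ (L ++ [u₀]) := by
    have h1 : List.Chain' G.Adj (u₀ :: (M ++ [v₀])) := hMchain
    have h2 : List.Chain' (flip G.Adj) (u₀ :: (M ++ [v₀])) :=
      h1.imp (fun a b hab => hab.symm)
    have h3 : List.Chain' G.Adj ((u₀ :: (M ++ [v₀])).reverse) :=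
      List.isChain_reverse.mpr h2
    rw [hrev] at h3
    exact h3
  have hLnodup : (v₀ :: (L ++ [u₀])).Nodup := by
    rw [← hrev, List.nodup_reverse]
    exact hMnodup
  have hLlen : L.length = 2 * k - 1 := by
    simp [hL, hM, hlen]
    omega
  have hLne : L ≠ [] := by
    intro hh
    rw [hh] at hLlen
    simp at hLlen
    omega
  have hu₀L : u₀ ∉ L := fun hh => hu₀M (List.mem_reverse.mp hh)
  have hv₀L : v₀ ∉ L := fun hh => hv₀M (List.mem_reverse.mp hh)
  set p : G.Walk v₀ u₀ := Stmt6Aux.buildWalk G L v₀ u₀ hLchain with hp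
  have hpsupp : p.support = v₀ :: (L ++ [u₀]) := Stmt6Aux.support_buildWalk G L v₀ u₀ hLchain
  have hppath : p.IsPath := Walk.IsPath.mk' (by rw [hpsupp]; exact hLnodup)
  have hpedge : s(u₀, v₀) ∉ p.edges := by
    refine Stmt6Aux.edge_not_mem G L v₀ u₀ hLchain u₀ v₀ huv.ne hu₀L hv₀L huv.ne' ?_
    intro hh
    exact absurd hh hLne
  have hMR : ∀ x ∈ M, x ∉ R := by
    intro x hx
    simp only [hM, List.mem_cons] at hx
    rcases hx with rfl | hx
    · exact hwR
    · exact hRl x (List.mem_cons.mpr hx)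
  refine ⟨Walk.cons huv p, ?_, ?_, ?_, ?_⟩
  · exact (Walk.cons_isCycle_iff p huv).mpr ⟨hppath, hpedge⟩
  · rw [Walk.length_cons, hp, Stmt6Aux.length_buildWalk, hLlen]
    omega
  · rw [Walk.edges_cons]
    exact List.mem_cons_self
  · intro x hx
    rw [Walk.support_cons, hpsupp] at hx
    simp only [List.mem_cons, List.mem_append, List.mem_singleton] at hx
    rcases hx with rfl | rfl | hx | rfl | hx
    · exact hu₀
    · exact hv₀
    · exact hMR x (List.mem_reverse.mp hx)
    · exact hu₀
    · exact absurd hx List.not_mem_nil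
end

section
/- Let 0 < δ < 1 be a constant and φ ≥ 2 an integer. Let H be a bipartite graph with colour classes A and B such that every vertex u ∈ A has at least δ|B| neighbours in B, |A| ≥ 3φ/δ, and |B| is sufficiently large (in terms of δ and φ). Then there exist a subset A' ⊆ A with |A'| = φ and a subset B' ⊆ B with |B'| = ⌊(2δ/3)^φ |B|⌋ such that every vertex of A' is adjacent to every vertex of B', i.e. H[A', B'] is a complete bipartite graph. -/
open SimpleGraph

open Finset in
/-- Lemma 3.3.  Let `0 < δ < 1` and `φ ≥ 2` be an integer.  Let `H` be a
bipartite graph with colour classes `A` and `B` such that every vertex of `A` has at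
least `δ|B|` neighbours in `B`, `|A| ≥ 3φ/δ`, and `|B|` is sufficiently large.  Then
there are `A' ⊆ A` with `|A'| = φ` and `B' ⊆ B` with `|B'| = ⌊(2δ/3)^φ |B|⌋` such that
every vertex of `A'` is adjacent to every vertex of `B'`. -/
theorem stmt_7 (δ : ℝ) (hδ0 : 0 < δ) (hδ1 : δ < 1) (φ : ℕ) (hφ : 2 ≤ φ) :
    ∃ N₀ : ℕ, ∀ (V : Type) [Fintype V] (H : SimpleGraph V) (A B : Finset V),
      Disjoint A B → (∀ x : V, x ∈ A ∨ x ∈ B) →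
      (∀ x y : V, H.Adj x y → (x ∈ A ∧ y ∈ B) ∨ (x ∈ B ∧ y ∈ A)) →
      (∀ u ∈ A, δ * (B.card : ℝ) ≤ (((B : Set V) ∩ H.neighborSet u).ncard : ℝ)) →
      (3 * (φ : ℝ) / δ ≤ (A.card : ℝ)) →
      N₀ ≤ B.card →
      ∃ A' ⊆ A, ∃ B' ⊆ B, A'.card = φ ∧
        B'.card = ⌊(2 * δ / 3) ^ φ * (B.card : ℝ)⌋₊ ∧
        ∀ a ∈ A', ∀ b ∈ B', H.Adj a b := by
  refine ⟨1, ?_⟩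
  intro V _ H A B _hdisj _hcover _hbip hdeg hA hB1
  classical
  obtain ⟨k, hk⟩ : ∃ k, φ = k + 1 := ⟨φ - 1, by omega⟩
  -- basic numeric facts
  have hφA : (φ : ℝ) ≤ (A.card : ℝ) := by
    have h3 : (φ : ℝ) ≤ 3 * φ / δ := by
      rw [le_div_iff₀ hδ0]
      nlinarith [(Nat.cast_nonneg φ : (0:ℝ) ≤ φ)]
    linarith
  have hφA' : φ ≤ A.card := by exact_mod_cast hφA
  have hBpos : (0:ℝ) < B.card := by exact_mod_cast hB1
  have hφδA : (φ : ℝ) ≤ δ / 3 * A.card := by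
    rw [div_le_iff₀ hδ0] at hA
    nlinarith
  -- degrees of vertices of B into A
  set d : V → ℕ := fun b => (A.filter (fun a => H.Adj a b)).card with hd
  -- min degree hypothesis in Finset form
  have hdeg' : ∀ u ∈ A, δ * B.card ≤ ((B.filter (fun b => H.Adj u b)).card : ℝ) := by
    intro u hu
    have h := hdeg u hu
    have he : (B : Set V) ∩ H.neighborSet u = ((B.filter (fun b => H.Adj u b)) : Finset V) := by
      ext x
      simp [SimpleGraph.mem_neighborSet, and_comm]
    rwa [he, Set.ncard_coe_finset] at h
  -- double counting
  have hdcN : ∑ b ∈ B, d b = ∑ u ∈ A, (B.filter (fun b => H.Adj u b)).card := by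
    simp only [hd, Finset.card_filter]
    exact Finset.sum_comm
  have hsum : δ * A.card * B.card ≤ ∑ b ∈ B, (d b : ℝ) := by
    have h1 : ∑ u ∈ A, δ * (B.card:ℝ) ≤ ∑ u ∈ A, ((B.filter (fun b => H.Adj u b)).card : ℝ) :=
      Finset.sum_le_sum fun u hu => hdeg' u hu
    rw [Finset.sum_const, nsmul_eq_mul] at h1
    have h2 : (∑ u ∈ A, ((B.filter (fun b => H.Adj u b)).card : ℝ)) = ∑ b ∈ B, (d b : ℝ) := by
      exact_mod_cast congrArg (Nat.cast (R := ℝ)) hdcN.symm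
    rw [h2] at h1
    calc δ * A.card * B.card = A.card * (δ * B.card) := by ring
      _ ≤ _ := h1
  -- the common-neighbourhood finsets
  set W : Finset V → Finset V := fun S => B.filter (fun b => ∀ a ∈ S, H.Adj a b) with hWdef
  -- swap the double sum over (S, b)
  have hswap : ∑ S ∈ A.powersetCard φ, (W S).card = ∑ b ∈ B, (d b).choose φ := by
    have h1 : ∀ S : Finset V, (W S).card = ∑ b ∈ B, if (∀ a ∈ S, H.Adj a b) then 1 else 0 :=
      fun S => by rw [hWdef, Finset.card_filter]
    simp_rw [h1]
    rw [Finset.sum_comm]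
    refine Finset.sum_congr rfl fun b _ => ?_
    rw [← Finset.card_filter]
    have h2 : (A.powersetCard φ).filter (fun S => ∀ a ∈ S, H.Adj a b)
        = (A.filter (fun a => H.Adj a b)).powersetCard φ := by
      ext S
      simp only [Finset.mem_filter, Finset.mem_powersetCard, Finset.subset_iff,
        Finset.mem_filter]
      constructor
      · rintro ⟨⟨hSA, hc⟩, hadj⟩
        exact ⟨fun x hx => ⟨hSA hx, hadj x hx⟩, hc⟩
      · rintro ⟨hSA, hc⟩
        exact ⟨⟨fun x hx => (hSA hx).1, hc⟩, fun a ha => (hSA ha).2⟩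
    rw [h2, Finset.card_powersetCard]
  -- pointwise bound (d b - φ)^φ ≤ φ! * choose
  have hchoose : ∀ n : ℕ, (n - φ)^φ ≤ Nat.factorial φ * n.choose φ := by
    intro n
    rw [← Nat.descFactorial_eq_factorial_mul_choose, Nat.descFactorial_eq_prod_range]
    calc (n - φ)^φ = ∏ _i ∈ range φ, (n - φ) := by rw [prod_const, card_range]
      _ ≤ ∏ i ∈ range φ, (n - i) := by
          refine Finset.prod_le_prod' fun i hi => ?_
          exact Nat.sub_le_sub_left (Nat.le_of_lt (mem_range.mp hi)) n
  -- lower bound on ∑ (d b - φ)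
  have hcs : ∀ n m : ℕ, (n:ℝ) - m ≤ ((n-m:ℕ):ℝ) := by
    intro n m
    rcases le_total m n with h|h
    · rw [Nat.cast_sub h]
    · rw [Nat.sub_eq_zero_of_le h]
      have : (n:ℝ) ≤ m := by exact_mod_cast h
      push_cast
      linarith
  have hs0 : 2 * δ / 3 * A.card * B.card ≤ ∑ b ∈ B, ((d b - φ : ℕ):ℝ) := by
    have h1 : ∑ b ∈ B, ((d b : ℝ) - φ) ≤ ∑ b ∈ B, ((d b - φ : ℕ):ℝ) :=
      Finset.sum_le_sum fun b _ => hcs (d b) φ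
    have h2 : ∑ b ∈ B, ((d b : ℝ) - φ) = (∑ b ∈ B, (d b : ℝ)) - B.card * φ := by
      rw [Finset.sum_sub_distrib, Finset.sum_const, nsmul_eq_mul]
    have h3 : (B.card : ℝ) * φ ≤ δ / 3 * A.card * B.card := by
      have := mul_le_mul_of_nonneg_left hφδA (le_of_lt hBpos)
      linarith
    have := hsum
    nlinarith
  -- power mean
  have hpm := pow_sum_div_card_le_sum_pow (s := B)
    (f := fun b => ((d b - φ : ℕ):ℝ)) (fun i _ => Nat.cast_nonneg _) k
  rw [← hk] at hpm
  -- key inequality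
  have hkey : (B.card:ℝ) * ((2 * δ / 3) * A.card)^φ
      ≤ (Nat.factorial φ : ℝ) * ∑ S ∈ A.powersetCard φ, ((W S).card : ℝ) := by
    have e1 : (B.card:ℝ) * ((2 * δ / 3) * A.card)^φ
        = (2 * δ / 3 * A.card * B.card)^φ / (B.card:ℝ)^k := by
      rw [hk]
      field_simp
      ring
    have e2 : (2 * δ / 3 * A.card * B.card)^φ ≤ (∑ b ∈ B, ((d b - φ : ℕ):ℝ))^φ := by
      refine pow_le_pow_left₀ ?_ hs0 φ
      positivity
    have e3 : (∑ b ∈ B, ((d b - φ : ℕ):ℝ))^φ / (B.card:ℝ)^k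
        ≤ ∑ b ∈ B, ((d b - φ : ℕ):ℝ)^φ := by
      exact_mod_cast hpm
    have e4 : ∑ b ∈ B, ((d b - φ : ℕ):ℝ)^φ
        ≤ (Nat.factorial φ : ℝ) * ∑ S ∈ A.powersetCard φ, ((W S).card : ℝ) := by
      have : ∑ b ∈ B, ((d b - φ)^φ : ℕ) ≤ Nat.factorial φ * ∑ S ∈ A.powersetCard φ, (W S).card := by
        rw [hswap, Finset.mul_sum]
        exact Finset.sum_le_sum fun b _ => hchoose (d b)
      calc ∑ b ∈ B, ((d b - φ : ℕ):ℝ)^φ = ((∑ b ∈ B, (d b - φ)^φ : ℕ) : ℝ) := by push_cast; ring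
        _ ≤ _ := by exact_mod_cast this
    calc (B.card:ℝ) * ((2 * δ / 3) * A.card)^φ
        = (2 * δ / 3 * A.card * B.card)^φ / (B.card:ℝ)^k := e1
      _ ≤ (∑ b ∈ B, ((d b - φ : ℕ):ℝ))^φ / (B.card:ℝ)^k :=
          div_le_div_of_nonneg_right e2 (by positivity)
      _ ≤ ∑ b ∈ B, ((d b - φ : ℕ):ℝ)^φ := e3
      _ ≤ _ := e4
  -- pigeonhole over the φ-subsets of A
  set c : ℝ := (2 * δ / 3)^φ * B.card with hcdef
  have hne : (A.powersetCard φ).Nonempty := Finset.powersetCard_nonempty.mpr hφA'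
  have hfac : (0:ℝ) < (Nat.factorial φ : ℝ) := by exact_mod_cast Nat.factorial_pos φ
  have hcount : ∑ _S ∈ A.powersetCard φ, c ≤ ∑ S ∈ A.powersetCard φ, ((W S).card : ℝ) := by
    rw [Finset.sum_const, nsmul_eq_mul, ← mul_le_mul_iff_right₀ hfac]
    have hnn : Nat.factorial φ * (A.card).choose φ ≤ A.card ^ φ := by
      rw [← Nat.descFactorial_eq_factorial_mul_choose]
      exact Nat.descFactorial_le_pow _ _
    have hn : (Nat.factorial φ : ℝ) * ((A.powersetCard φ).card) ≤ (A.card:ℝ)^φ := by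
      rw [Finset.card_powersetCard]
      exact_mod_cast hnn
    have hc0 : (0:ℝ) ≤ c := by positivity
    calc (Nat.factorial φ:ℝ) * (((A.powersetCard φ).card : ℝ) * c)
        = ((Nat.factorial φ:ℝ) * (A.powersetCard φ).card) * c := by ring
      _ ≤ (A.card:ℝ)^φ * c := mul_le_mul_of_nonneg_right hn hc0
      _ = (B.card:ℝ) * ((2 * δ / 3) * A.card)^φ := by rw [hcdef, mul_pow]; ring
      _ ≤ _ := hkey
  obtain ⟨S, hSmem, hcS⟩ := Finset.exists_le_of_sum_le hne hcount
  obtain ⟨hSA, hScard⟩ := Finset.mem_powersetCard.mp hSmem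
  have hm : ⌊c⌋₊ ≤ (W S).card := by
    have h := Nat.floor_le_of_le hcS
    simpa using h
  obtain ⟨B', hB'sub, hB'card⟩ := Finset.exists_subset_card_eq hm
  refine ⟨S, hSA, B', hB'sub.trans (Finset.filter_subset _ _), hScard, hB'card, ?_⟩
  intro a ha b hb
  exact (Finset.mem_filter.mp (hB'sub hb)).2 a ha
end

section
/- (Progressive induction.) Let 𝔘 = ⋃_{n=1}^∞ 𝔘_n be a set whose subsets 𝔘_n are pairwise disjoint and finite, let B be a property (predicate) on 𝔘, and let φ : 𝔘 → ℕ be a function such that: (i) if a satisfies B then φ(a) = 0; (ii) there is an N_0 such that for every n > N_0 and every a ∈ 𝔘_n, either a satisfies B, or there exist n* and a* with n/2 < n* < n, a* ∈ 𝔘_{n*}, and φ(a) < φ(a*). Then there exists n_0 such that for every n > n_0, every a ∈ 𝔘_n satisfies B. -/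
open SimpleGraph

/-- Simonovits' progressive induction, Lemma 3.1.  Let
`𝔘 = ⋃ₙ 𝔘ₙ` with the `𝔘ₙ` pairwise disjoint finite sets (modelled by an index function
`ν : U → ℕ` with finite fibres), let `B` be a property on `𝔘` and `φ : 𝔘 → ℕ` such that
(i) `φ(a) = 0` whenever `B a` holds, and (ii) there is `N₀` such that for every `a` with
`ν a > N₀`, either `B a` holds or there is `a*` with `ν a / 2 < ν a* < ν a` and
`φ a < φ a*`.  Then there is `n₀` such that `B a` holds for every `a` with `ν a > n₀`. -/
theorem stmt_13 {U : Type} (ν : U → ℕ) (hν : ∀ a : U, 1 ≤ ν a)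
    (hfin : ∀ n : ℕ, {a : U | ν a = n}.Finite)
    (B : U → Prop) (φ : U → ℕ)
    (h0 : ∀ a : U, B a → φ a = 0)
    (hstep : ∃ N₀ : ℕ, ∀ a : U, N₀ < ν a →
      B a ∨ ∃ a' : U, ν a < 2 * ν a' ∧ ν a' < ν a ∧ φ a < φ a') :
    ∃ n₀ : ℕ, ∀ a : U, n₀ < ν a → B a := by
  classical
  obtain ⟨N₀, hstep⟩ := hstep
  set Φ : ℕ → ℕ := fun n => (hfin n).toFinset.sup φ with hΦdef
  set M : ℕ → ℕ := fun n => (Finset.Ioc n (2*n)).sup Φ with hMdef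
  have hφΦ : ∀ a : U, φ a ≤ Φ (ν a) := fun a =>
    Finset.le_sup (by simp [Set.Finite.mem_toFinset])
  have hΦM : ∀ n k, n < k → k ≤ 2*n → Φ k ≤ M n := fun n k h1 h2 =>
    Finset.le_sup (Finset.mem_Ioc.mpr ⟨h1, h2⟩)
  set N := max N₀ 1 with hN
  have hN1 : 1 ≤ N := le_max_right _ _
  have hN0 : N₀ ≤ N := le_max_left _ _
  have key : ∀ n, N ≤ n → M (2*n) ≠ 0 → M (2*n) < M n := by
    intro n hn hne
    obtain ⟨k, hk, hkeq⟩ := Finset.exists_mem_eq_sup (Finset.Ioc (2*n) (2*(2*n)))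
      (Finset.nonempty_Ioc.mpr (by omega)) Φ
    rw [Finset.mem_Ioc] at hk
    have hΦk : Φ k ≠ 0 := by rw [hMdef] at hne; simpa [hkeq] using hne
    have hnea : ((hfin k).toFinset).Nonempty := by
      rcases Finset.eq_empty_or_nonempty ((hfin k).toFinset) with h | h
      · exfalso; apply hΦk; simp only [hΦdef]; rw [h]; simp
      · exact h
    obtain ⟨a, ha, haeq⟩ := Finset.exists_mem_eq_sup _ hnea φ
    rw [Set.Finite.mem_toFinset] at ha
    have hka : ν a = k := ha
    have hMk : M (2*n) = Φ k := hkeq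
    have hφa : φ a = Φ k := haeq.symm
    have hnB : ¬ B a := by
      intro hB
      exact hΦk (by rw [← hφa, h0 a hB])
    have hνa : N₀ < ν a := by omega
    rcases hstep a hνa with hB | ⟨a', h1, h2, h3⟩
    · exact absurd hB hnB
    · have hφa' : φ a' ≤ Φ (ν a') := hφΦ a'
      rcases le_or_gt (ν a') (2*n) with hle | hlt
      · have : Φ (ν a') ≤ M n := hΦM n (ν a') (by omega) hle
        omega
      · exfalso
        have : Φ (ν a') ≤ M (2*n) := hΦM (2*n) (ν a') hlt (by omega)
        omega
  have hex : ∃ j, M (2^j * N) = 0 := by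
    by_contra h
    push_neg at h
    have hdec : ∀ j, M (2^(j+1) * N) < M (2^j * N) := by
      intro j
      have h2 : 2^(j+1) * N = 2 * (2^j * N) := by ring
      have hle : N ≤ 2^j * N := Nat.le_mul_of_pos_left N (Nat.pow_pos (by norm_num))
      rw [h2]
      exact key (2^j * N) hle (by rw [← h2]; exact h (j+1))
    have hsum : ∀ j, M (2^j * N) + j ≤ M (2^0 * N) := by
      intro j
      induction j with
      | zero => omega
      | succ i ih => have := hdec i; omega
    have := hsum (M (2^0 * N) + 1)
    omega
  obtain ⟨j, hj⟩ := hex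
  have hzero : ∀ i, M (2^(j+i) * N) = 0 := by
    intro i
    induction i with
    | zero => simpa using hj
    | succ i ih =>
      by_contra h
      have h2 : 2^(j+(i+1)) * N = 2 * (2^(j+i) * N) := by ring
      have hle : N ≤ 2^(j+i) * N := Nat.le_mul_of_pos_left N (Nat.pow_pos (by norm_num))
      have := key (2^(j+i) * N) hle (by rw [← h2]; exact h)
      rw [← h2] at this
      omega
  have hΦ0aux : ∀ i k, 2^j * N < k → k ≤ 2^(j+i) * N → Φ k = 0 := by
    intro i
    induction i with
    | zero => intro k h1 h2; rw [Nat.add_zero] at h2; omega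
    | succ i ih =>
      intro k h1 h2
      rcases le_or_gt k (2^(j+i) * N) with h | h
      · exact ih k h1 h
      · have h4 : k ≤ 2 * (2^(j+i) * N) := by
          have : 2^(j+(i+1)) * N = 2 * (2^(j+i) * N) := by ring
          omega
        have := hΦM (2^(j+i) * N) k h h4
        have := hzero i
        omega
  have hΦ0 : ∀ k, 2^j * N < k → Φ k = 0 := by
    intro k hk
    refine hΦ0aux k k hk ?_
    have h1 : k < 2^k := Nat.lt_two_pow_self
    have h2 : 2^k ≤ 2^(j+k) := Nat.pow_le_pow_right (by norm_num) (by omega)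
    have h3 : 2^(j+k) ≤ 2^(j+k) * N := Nat.le_mul_of_pos_right _ (by omega)
    omega
  refine ⟨2^(j+1) * N, fun a ha => ?_⟩
  by_contra hB
  have hνa : N₀ < ν a := by
    have : N ≤ 2^(j+1) * N := Nat.le_mul_of_pos_left N (Nat.pow_pos (by norm_num))
    omega
  rcases hstep a hνa with h | ⟨a', h1, h2, h3⟩
  · exact hB h
  · have hgt : 2^j * N < ν a' := by
      have : 2^(j+1) * N = 2 * (2^j * N) := by ring
      omega
    have := hΦ0 (ν a') hgt
    have := hφΦ a'
    omega
end

section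
/- Let F = K_1 ∇ F• where every component of F• is an even cycle, set k = |F•|/2, and let F^o be an odd-ballooning of F in which every substituted odd cycle has length at least five. Then for every n ≥ |F•|, the graph (M_{k−1} ∪ K_1) ∇ T_{n−2k+1, 2} contains no subgraph isomorphic to F^o. -/
open SimpleGraph

section Stmt16Aux

open SimpleGraph

lemma stmt16_host_adj_rr {p m : ℕ} {t t' : Fin m}
    (h : (graphJoin (graphDisjUnion (matchingGraph p) (⊤ : SimpleGraph (Fin 1)))
      (SimpleGraph.turanGraph m 2)).Adj (Sum.inr t) (Sum.inr t')) :
    (t:ℕ) % 2 ≠ (t':ℕ) % 2 := by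
  rw [graphJoin, fromRel_adj] at h
  obtain ⟨hne, h | h⟩ := h <;>
    rcases h with ⟨a, b, h1, h2⟩ | ⟨a, b, h1, h2, h3⟩ | ⟨a, b, h1, h2, h3⟩ <;>
    simp_all [turanGraph] <;> omega

lemma stmt16_host_adj_ll {p m : ℕ} {a b : Fin (2*p) ⊕ Fin 1}
    (h : (graphJoin (graphDisjUnion (matchingGraph p) (⊤ : SimpleGraph (Fin 1)))
      (SimpleGraph.turanGraph m 2)).Adj (Sum.inl a) (Sum.inl b)) :
    ∃ x y : Fin (2*p), a = Sum.inl x ∧ b = Sum.inl y ∧ (x:ℕ) ≠ (y:ℕ) ∧ (x:ℕ)/2 = (y:ℕ)/2 := by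
  rw [graphJoin, fromRel_adj] at h
  have hAG : (graphDisjUnion (matchingGraph p) (⊤ : SimpleGraph (Fin 1))).Adj a b := by
    obtain ⟨hne, h | h⟩ := h <;>
      rcases h with ⟨x, y, h1, h2⟩ | ⟨x, y, h1, h2, h3⟩ | ⟨x, y, h1, h2, h3⟩ <;>
      simp_all
    exact h3.symm
  rw [graphDisjUnion, fromRel_adj] at hAG
  have key : ∀ x y : Fin 1, ¬ (⊤ : SimpleGraph (Fin 1)).Adj x y := by decide
  obtain ⟨-, h | h⟩ := hAG <;>
      rcases h with ⟨x, y, h1, h2, h3⟩ | ⟨x, y, h1, h2, h3⟩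
  · rw [matchingGraph, fromRel_adj] at h3
    subst h1 h2
    refine ⟨x, y, rfl, rfl, ?_, by omega⟩
    simpa [Fin.val_eq_val] using h3.1
  · exact absurd h3 (key _ _)
  · rw [matchingGraph, fromRel_adj] at h3
    subst h1 h2
    refine ⟨y, x, rfl, rfl, ?_, by omega⟩
    simpa [Fin.val_eq_val] using (Ne.symm h3.1)
  · exact absurd h3 (key _ _)

/-- parity value of a host vertex -/
def stmt16_hostPar {p m : ℕ} (x : (Fin (2*p) ⊕ Fin 1) ⊕ Fin m) : ℕ :=
  Sum.elim (fun _ => 0) (fun t => (t : ℕ) % 2) x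

lemma stmt16_right_of_not_left {A B : Type} {x : A ⊕ B} (h : ¬ x.isLeft = true) :
    x.isRight = true := by cases x <;> simp_all

lemma stmt16_no_lr {A B : Type} {x : A ⊕ B} (h1 : x.isLeft = true)
    (h2 : x.isRight = true) : False := by cases x <;> simp_all

lemma stmt16_walk_parity {p m : ℕ} {x y : (Fin (2*p) ⊕ Fin 1) ⊕ Fin m}
    (w : (graphJoin (graphDisjUnion (matchingGraph p) (⊤ : SimpleGraph (Fin 1)))
      (SimpleGraph.turanGraph m 2)).Walk x y)
    (hR : ∀ z ∈ w.support, z.isRight = true) :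
    (w.length + stmt16_hostPar x) % 2 = stmt16_hostPar y % 2 := by
  induction w with
  | nil => simp
  | @cons x b y hadj w ih =>
    have hx : x.isRight = true := hR x (by simp)
    have hb : b.isRight = true := hR b (by simp [Walk.support_cons])
    obtain ⟨s, rfl⟩ := Sum.isRight_iff.mp hx
    obtain ⟨t, rfl⟩ := Sum.isRight_iff.mp hb
    have hst := stmt16_host_adj_rr hadj
    have ih' := ih (fun z hz => hR z (by simp [Walk.support_cons, hz]))
    have e1 : stmt16_hostPar (Sum.inr t : (Fin (2*p) ⊕ Fin 1) ⊕ Fin m) = (t:ℕ) % 2 := rfl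
    have e2 : stmt16_hostPar (Sum.inr s : (Fin (2*p) ⊕ Fin 1) ⊕ Fin m) = (s:ℕ) % 2 := rfl
    rw [e1] at ih'
    rw [Walk.length_cons, e2]
    omega

lemma stmt16_odd_walk_meets_left {p m : ℕ} {x : (Fin (2*p) ⊕ Fin 1) ⊕ Fin m}
    (w : (graphJoin (graphDisjUnion (matchingGraph p) (⊤ : SimpleGraph (Fin 1)))
      (SimpleGraph.turanGraph m 2)).Walk x x)
    (hodd : Odd w.length) :
    ∃ z ∈ w.support, z.isLeft = true := by
  by_contra hcon
  push_neg at hcon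
  have := stmt16_walk_parity w
    (fun z hz => stmt16_right_of_not_left (by simpa using hcon z hz))
  rw [Nat.odd_iff] at hodd
  omega

lemma stmt16_getLeft_inj {A B : Type} {x y : A ⊕ B} (hx : x.isLeft = true)
    (hy : y.isLeft = true) (h : x.getLeft hx = y.getLeft hy) : x = y := by
  cases x <;> cases y <;> simp_all

lemma stmt16_exists_succ {α : Type} [Fintype α] (Fdot : SimpleGraph α)
    (hcomp : ∀ C : Fdot.ConnectedComponent,
      ∃ m : ℕ, 2 ≤ m ∧ Nonempty ((Fdot.induce C.supp) ≃g SimpleGraph.cycleGraph (2*m))) :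
    ∃ succ : α → α, (∀ v, Fdot.Adj v (succ v)) ∧ Function.Injective succ ∧
      (∀ v, succ (succ v) ≠ v) ∧ Function.Surjective succ := by
  classical
  choose mfun hm2 hiso using hcomp
  haveI : ∀ C : Fdot.ConnectedComponent, NeZero (2 * mfun C) :=
    fun C => ⟨by have := hm2 C; omega⟩
  let φ : ∀ C : Fdot.ConnectedComponent,
      (Fdot.induce C.supp) ≃g SimpleGraph.cycleGraph (2 * mfun C) :=
    fun C => (hiso C).some
  have hmem : ∀ v : α, v ∈ (Fdot.connectedComponentMk v).supp :=
    fun v => (ConnectedComponent.mem_supp_iff _ _).mpr rfl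
  let succ : α → α := fun v =>
    ((φ (Fdot.connectedComponentMk v)).symm
      ((φ (Fdot.connectedComponentMk v)) ⟨v, hmem v⟩ + 1)).val
  have key : ∀ (C : Fdot.ConnectedComponent) (v : α) (hv : Fdot.connectedComponentMk v = C),
      succ v = ((φ C).symm ((φ C) ⟨v, (ConnectedComponent.mem_supp_iff _ _).mpr hv⟩ + 1)).val := by
    intro C v hv; subst hv; rfl
  have fin1 : ∀ C : Fdot.ConnectedComponent, ((1 : Fin (2 * mfun C)) : ℕ) = 1 := by
    intro C; have h := hm2 C
    rw [Fin.val_one']; exact Nat.mod_eq_of_lt (by omega)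
  have hadj : ∀ v : α, Fdot.Adj v (succ v) := by
    intro v
    set C := Fdot.connectedComponentMk v with hC
    set x : C.supp := ⟨v, hmem v⟩ with hx
    have h1 : succ v = ((φ C).symm ((φ C) x + 1)).val := key C v rfl
    set y := (φ C).symm ((φ C) x + 1) with hy
    have h2 : (Fdot.induce C.supp).Adj x y := by
      rw [← SimpleGraph.Iso.map_adj_iff (φ C)]
      have h3 : (φ C) y = (φ C) x + 1 := by
        rw [hy]; exact (φ C).apply_symm_apply _
      rw [h3, cycleGraph_adj']
      right
      rw [add_sub_cancel_left]
      exact fin1 C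
    have h4 : Fdot.Adj (x : α) (y : α) := by
      simpa [SimpleGraph.induce, comap_adj] using h2
    rw [h1]; exact h4
  have hcompmk : ∀ v : α, Fdot.connectedComponentMk (succ v) = Fdot.connectedComponentMk v :=
    fun v => ConnectedComponent.sound (hadj v).symm.reachable
  have hinj : Function.Injective succ := by
    intro u v h
    have hcu : Fdot.connectedComponentMk u = Fdot.connectedComponentMk v := by
      rw [← hcompmk u, ← hcompmk v, h]
    set C := Fdot.connectedComponentMk v with hC
    have h1 := key C u hcu
    have h2 := key C v rfl
    rw [h1, h2] at h
    have h3 := Subtype.val_injective h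
    have h4 := (φ C).symm.injective h3
    have h5 := add_right_cancel h4
    have h6 := (φ C).injective h5
    exact congrArg Subtype.val h6
  have hss : ∀ v : α, succ (succ v) ≠ v := by
    intro v hvv
    set C := Fdot.connectedComponentMk v with hC
    set x : C.supp := ⟨v, hmem v⟩ with hx
    have h1 : succ v = ((φ C).symm ((φ C) x + 1)).val := key C v rfl
    have h2 := key C (succ v) (hcompmk v)
    have h3 : (⟨succ v, (ConnectedComponent.mem_supp_iff _ _).mpr (hcompmk v)⟩ : C.supp)
        = (φ C).symm ((φ C) x + 1) := by
      apply Subtype.ext; exact h1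
    rw [h3] at h2
    rw [(φ C).apply_symm_apply] at h2
    rw [hvv] at h2
    have h4 : (φ C).symm ((φ C) x + 1 + 1) = x := by
      apply Subtype.ext; exact h2.symm
    have h5 : (φ C) x + 1 + 1 = (φ C) x := by
      have := congrArg (φ C) h4
      rwa [(φ C).apply_symm_apply] at this
    have h7 : (1 : Fin (2 * mfun C)) + 1 = 0 := by
      have h8 := congrArg (fun z => z - (φ C) x) h5
      simpa [add_assoc, add_sub_cancel_left, sub_self] using h8
    have h9 := congrArg Fin.val h7
    rw [Fin.val_add, fin1 C, Fin.val_zero] at h9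
    have hN := hm2 C
    rw [Nat.mod_eq_of_lt (by omega)] at h9
    omega
  exact ⟨succ, hadj, hinj, hss, (Finite.injective_iff_surjective).mp hinj⟩

end Stmt16Aux

/-- Let `F = K₁ ∇ F•` where every component of `F•` is an even cycle,
let `k = |F•|/2`, and let `F^o` be an odd-ballooning of `F` with every substituted odd
cycle of length at least five.  Then for every `n ≥ |F•|`, the graph
`(M_{k-1} ∪ K₁) ∇ T_{n-2k+1, 2}` contains no subgraph isomorphic to `F^o`. -/
theorem stmt_16 {α β : Type} [Fintype α] [Fintype β] [Nonempty α]
    (Fdot : SimpleGraph α) (k : ℕ) (hk : Fintype.card α = 2 * k)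
    (hcomp : ∀ C : Fdot.ConnectedComponent, IsEvenCycleComp Fdot C)
    (Fo : SimpleGraph β)
    (hFo : IsOddBallooning (graphJoin (⊤ : SimpleGraph (Fin 1)) Fdot) Fo) :
    ∀ n : ℕ, Fintype.card α ≤ n →
      IsFreeOf Fo (graphJoin
        (graphDisjUnion (matchingGraph (k - 1)) (⊤ : SimpleGraph (Fin 1)))
        (SimpleGraph.turanGraph (n - 2 * k + 1) 2)) := by
  classical
  intro n hn hcopy
  obtain ⟨em, hem⟩ := hcopy
  obtain ⟨f, P, hadj, hpath, hlen, hsym, hsupp, hdisj, hcov, hedge⟩ := hFo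
  have hk1 : 1 ≤ k := by
    have := Fintype.card_pos (α := α); omega
  -- adjacency facts in F
  have hFc : ∀ v : α, (graphJoin (⊤ : SimpleGraph (Fin 1)) Fdot).Adj
      (Sum.inl (0 : Fin 1)) (Sum.inr v) := by
    intro v
    rw [graphJoin, fromRel_adj]
    exact ⟨by simp, Or.inl (Or.inl ⟨0, v, rfl, rfl⟩)⟩
  have hFd : ∀ u v : α, Fdot.Adj u v → (graphJoin (⊤ : SimpleGraph (Fin 1)) Fdot).Adj
      (Sum.inr u) (Sum.inr v) := by
    intro u v h
    rw [graphJoin, fromRel_adj]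
    exact ⟨by simp [h.ne], Or.inl (Or.inr (Or.inr ⟨u, v, rfl, rfl, h⟩))⟩
  -- the graph homomorphism from Fo into the host graph
  let hom : Fo →g (graphJoin
      (graphDisjUnion (matchingGraph (k - 1)) (⊤ : SimpleGraph (Fin 1)))
      (SimpleGraph.turanGraph (n - 2 * k + 1) 2)) := ⟨fun b => em b, fun {a b} h => hem h⟩
  -- each substituted odd cycle with both branch vertices on the Turán side
  -- contains a private new vertex mapped to the small side
  have privA : ∀ (u v : Fin 1 ⊕ α) (h : (graphJoin (⊤ : SimpleGraph (Fin 1)) Fdot).Adj u v),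
      (em (f u)).isRight = true → (em (f v)).isRight = true →
      ∃ b : β, b ∈ (P u v h).support ∧ b ∉ Set.range f ∧ (em b).isLeft = true := by
    intro u v h hu hv
    have hodd : Odd (((SimpleGraph.Walk.cons (hadj u v h) (P u v h)).map hom).length) := by
      rw [SimpleGraph.Walk.length_map, SimpleGraph.Walk.length_cons]
      exact (hlen u v h).2.add_one
    obtain ⟨z, hz, hzL⟩ := stmt16_odd_walk_meets_left _ hodd
    rw [SimpleGraph.Walk.support_map] at hz
    obtain ⟨b, hb, rfl⟩ := List.mem_map.mp hz
    rw [SimpleGraph.Walk.support_cons, List.mem_cons] at hb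
    have hbu : b ≠ f u := by rintro rfl; exact stmt16_no_lr hzL hu
    have hbv : b ≠ f v := by rintro rfl; exact stmt16_no_lr hzL hv
    have hb' : b ∈ (P u v h).support := hb.resolve_left hbu
    rcases hsupp u v h b hb' with h1 | h1 | h1
    · exact absurd h1 hbu
    · exact absurd h1 hbv
    · exact ⟨b, hb', h1, hzL⟩
  choose privB hB1 hB2 hB3 using privA
  -- private vertices of distinct substituted cycles are distinct
  have hBne : ∀ (u v u' v' : Fin 1 ⊕ α)
      (h : (graphJoin (⊤ : SimpleGraph (Fin 1)) Fdot).Adj u v)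
      (h' : (graphJoin (⊤ : SimpleGraph (Fin 1)) Fdot).Adj u' v')
      (hu hv hu' hv'), s(u, v) ≠ s(u', v') →
      privB u v h hu hv ≠ privB u' v' h' hu' hv' := by
    intro u v u' v' h h' hu hv hu' hv' hne heq
    apply hB2 u v h hu hv
    exact hdisj u v u' v' h h' hne _ (hB1 u v h hu hv) (heq ▸ hB1 u' v' h' hu' hv')
  -- successor permutation along the even cycles of Fdot
  obtain ⟨succ, hsadj, hsinj, hss, hssur⟩ := stmt16_exists_succ Fdot hcomp
  -- construct an injection from α into the small side of the host graph
  have main : ∃ tok : α → (Fin (2*(k-1)) ⊕ Fin 1) ⊕ Fin (n - 2*k + 1),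
      Function.Injective tok ∧ ∀ v, (tok v).isLeft = true := by
    cases hh : em (f (Sum.inl (0 : Fin 1))) with
    | inr th =>
      -- Case 1 : the hub is on the Turán side
      have hubR : (em (f (Sum.inl (0 : Fin 1)))).isRight = true := by rw [hh]; rfl
      refine ⟨fun v => if hL : (em (f (Sum.inr v))).isLeft = true then em (f (Sum.inr v))
        else em (privB (Sum.inl 0) (Sum.inr v) (hFc v) hubR
          (stmt16_right_of_not_left hL)), ?_, ?_⟩
      · intro u v heq
        dsimp only at heq
        by_cases hLu : (em (f (Sum.inr u))).isLeft = true <;>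
          by_cases hLv : (em (f (Sum.inr v))).isLeft = true
        · rw [dif_pos hLu, dif_pos hLv] at heq
          exact Sum.inr.inj (f.injective (em.injective heq))
        · rw [dif_pos hLu, dif_neg hLv] at heq
          exact absurd ⟨Sum.inr u, em.injective heq⟩ (hB2 _ _ _ _ _)
        · rw [dif_neg hLu, dif_pos hLv] at heq
          exact absurd ⟨Sum.inr v, (em.injective heq).symm⟩ (hB2 _ _ _ _ _)
        · rw [dif_neg hLu, dif_neg hLv] at heq
          by_cases huv : u = v
          · exact huv
          · exfalso
            have hsne : s((Sum.inl 0 : Fin 1 ⊕ α), Sum.inr u)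
                ≠ s((Sum.inl 0 : Fin 1 ⊕ α), Sum.inr v) := by
              simp only [Ne, Sym2.eq_iff]
              rintro (⟨-, h2⟩ | ⟨h1, -⟩)
              · exact huv (Sum.inr.inj h2)
              · cases h1
            exact hBne _ _ _ _ _ _ _ _ _ _ hsne (em.injective heq)
      · intro v
        dsimp only
        by_cases hL : (em (f (Sum.inr v))).isLeft = true
        · rw [dif_pos hL]; exact hL
        · rw [dif_neg hL]; exact hB3 _ _ _ _ _
    | inl ah =>
      -- Case 2 : the hub is on the small side
      have hostAdj : ∀ v : α, (graphJoin
          (graphDisjUnion (matchingGraph (k - 1)) (⊤ : SimpleGraph (Fin 1)))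
          (SimpleGraph.turanGraph (n - 2 * k + 1) 2)).Adj
          (em (f (Sum.inl (0 : Fin 1)))) (em (f (Sum.inr v))) :=
        fun v => hem (hadj _ _ (hFc v))
      by_cases hex : ∃ v0 : α, (em (f (Sum.inr v0))).isLeft = true
      · obtain ⟨v0, hv0⟩ := hex
        -- at most one branch vertex can be on the small side
        have huniq : ∀ v : α, (em (f (Sum.inr v))).isLeft = true → v = v0 := by
          intro v hL
          obtain ⟨av, hav⟩ := Sum.isLeft_iff.mp hL
          obtain ⟨av0, hav0⟩ := Sum.isLeft_iff.mp hv0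
          have h1 := hostAdj v; rw [hh, hav] at h1
          have h2 := hostAdj v0; rw [hh, hav0] at h2
          obtain ⟨x, y, hx, hy, hxy, hdiv⟩ := stmt16_host_adj_ll h1
          obtain ⟨x', y', hx', hy', hxy', hdiv'⟩ := stmt16_host_adj_ll h2
          have hxx : (x : ℕ) = (x' : ℕ) :=
            congrArg Fin.val (Sum.inl.inj (hx.symm.trans hx'))
          have hyy : y = y' := Fin.ext (by omega)
          have : em (f (Sum.inr v)) = em (f (Sum.inr v0)) := by
            rw [hav, hav0, hy, hy', hyy]
          exact Sum.inr.inj (f.injective (em.injective this))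
        obtain ⟨p0, hp0⟩ := hssur v0
        have hp0ne : p0 ≠ v0 := by
          rintro rfl
          have := hsadj p0; rw [hp0] at this
          exact Fdot.irrefl this
        have hr1 : ∀ v : α, v ≠ v0 → (em (f (Sum.inr v))).isRight = true :=
          fun v h0 => stmt16_right_of_not_left (fun hL => h0 (huniq v hL))
        have hr2 : ∀ v : α, v ≠ p0 → (em (f (Sum.inr (succ v)))).isRight = true :=
          fun v hp => stmt16_right_of_not_left
            (fun hL => hp (hsinj ((huniq (succ v) hL).trans hp0.symm)))
        refine ⟨fun v =>
          if h0 : v = v0 then em (f (Sum.inr v0))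
          else if hp : v = p0 then em (f (Sum.inl (0 : Fin 1)))
          else em (privB (Sum.inr v) (Sum.inr (succ v)) (hFd v (succ v) (hsadj v))
            (hr1 v h0) (hr2 v hp)), ?_, ?_⟩
        · intro u v heq
          dsimp only at heq
          by_cases h0u : u = v0 <;> by_cases h0v : v = v0
          · exact h0u.trans h0v.symm
          · rw [dif_pos h0u, dif_neg h0v] at heq
            by_cases hpv : v = p0
            · rw [dif_pos hpv] at heq
              exact absurd (f.injective (em.injective heq)) (by simp)
            · rw [dif_neg hpv] at heq
              exact absurd ⟨Sum.inr v0, em.injective heq⟩ (hB2 _ _ _ _ _)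
          · rw [dif_neg h0u, dif_pos h0v] at heq
            by_cases hpu : u = p0
            · rw [dif_pos hpu] at heq
              exact absurd (f.injective (em.injective heq)) (by simp)
            · rw [dif_neg hpu] at heq
              exact absurd ⟨Sum.inr v0, (em.injective heq).symm⟩ (hB2 _ _ _ _ _)
          · rw [dif_neg h0u, dif_neg h0v] at heq
            by_cases hpu : u = p0 <;> by_cases hpv : v = p0
            · exact hpu.trans hpv.symm
            · rw [dif_pos hpu, dif_neg hpv] at heq
              exact absurd ⟨Sum.inl 0, em.injective heq⟩ (hB2 _ _ _ _ _)
            · rw [dif_neg hpu, dif_pos hpv] at heq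
              exact absurd ⟨Sum.inl 0, (em.injective heq).symm⟩ (hB2 _ _ _ _ _)
            · rw [dif_neg hpu, dif_neg hpv] at heq
              by_cases huv : u = v
              · exact huv
              · exfalso
                have hsne : s((Sum.inr u : Fin 1 ⊕ α), Sum.inr (succ u))
                    ≠ s((Sum.inr v : Fin 1 ⊕ α), Sum.inr (succ v)) := by
                  simp only [Ne, Sym2.eq_iff]
                  rintro (⟨h1, -⟩ | ⟨h1, h2⟩)
                  · exact huv (Sum.inr.inj h1)
                  · apply hss v
                    rw [← Sum.inr.inj h1]
                    exact Sum.inr.inj h2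
                exact hBne _ _ _ _ _ _ _ _ _ _ hsne (em.injective heq)
        · intro v
          dsimp only
          by_cases h0 : v = v0
          · rw [dif_pos h0]; exact hv0
          · rw [dif_neg h0]
            by_cases hp : v = p0
            · rw [dif_pos hp, hh]; rfl
            · rw [dif_neg hp]; exact hB3 _ _ _ _ _
      · -- no branch vertex on the small side
        push_neg at hex
        have hr : ∀ v : α, (em (f (Sum.inr v))).isRight = true := by
          intro v
          exact stmt16_right_of_not_left (by simpa using hex v)
        refine ⟨fun v => em (privB (Sum.inr v) (Sum.inr (succ v))
          (hFd v (succ v) (hsadj v)) (hr v) (hr (succ v))), ?_, ?_⟩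
        · intro u v heq
          dsimp only at heq
          by_cases huv : u = v
          · exact huv
          · exfalso
            have hsne : s((Sum.inr u : Fin 1 ⊕ α), Sum.inr (succ u))
                ≠ s((Sum.inr v : Fin 1 ⊕ α), Sum.inr (succ v)) := by
              simp only [Ne, Sym2.eq_iff]
              rintro (⟨h1, -⟩ | ⟨h1, h2⟩)
              · exact huv (Sum.inr.inj h1)
              · apply hss v
                rw [← Sum.inr.inj h1]
                exact Sum.inr.inj h2
            exact hBne _ _ _ _ _ _ _ _ _ _ hsne (em.injective heq)
        · intro v; exact hB3 _ _ _ _ _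
  -- the cardinality contradiction
  obtain ⟨tok, htinj, htL⟩ := main
  have hcard : Fintype.card α ≤ Fintype.card (Fin (2*(k-1)) ⊕ Fin 1) := by
    apply Fintype.card_le_of_injective (fun v => (tok v).getLeft (htL v))
    intro u v h
    exact htinj (stmt16_getLeft_inj (htL u) (htL v) h)
  rw [hk] at hcard
  simp only [Fintype.card_sum, Fintype.card_fin] at hcard
  omega
end

section
/- Let m ≥ 1, let F_m = K_1 ∇ M_m be the friendship graph consisting of m triangles sharing exactly one common vertex, and let F_m^o be an odd-ballooning of F_m in which every substituted odd cycle has length at least five. Then for every n ≥ m, the graph K_m ∇ T_{n−m, 2} contains no subgraph isomorphic to F_m^o. -/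
open SimpleGraph

private lemma zmod2_succ {a b : ZMod 2} (h : a ≠ b) : b = a + 1 := by
  revert h; revert a b; decide

private lemma walk_parity {V : Type} {G : SimpleGraph V} (χ : V → ZMod 2) :
    ∀ {x y : V} (p : G.Walk x y),
      (∀ a ∈ p.support, ∀ b ∈ p.support, G.Adj a b → χ a ≠ χ b) →
      χ y = χ x + (p.length : ZMod 2) := by
  intro x y p
  induction p with
  | nil => simp
  | @cons u v w h q ih =>
    intro hs
    have h1 : χ u ≠ χ v := by
      refine hs u (by simp) v ?_ h
      simp only [SimpleGraph.Walk.support_cons, List.mem_cons]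
      exact Or.inr q.start_mem_support
    have h2 : χ w = χ v + (q.length : ZMod 2) := by
      refine ih (fun a ha b hb hab => hs a ?_ b ?_ hab) <;>
        simp only [SimpleGraph.Walk.support_cons, List.mem_cons] <;>
        [exact Or.inr ha; exact Or.inr hb]
    rw [SimpleGraph.Walk.length_cons, h2, zmod2_succ h1]
    push_cast
    ring


private def Av (m : ℕ) (j : Fin m) : Fin 1 ⊕ Fin (2 * m) := Sum.inr ⟨2 * j, by omega⟩

private def Bv (m : ℕ) (j : Fin m) : Fin 1 ⊕ Fin (2 * m) := Sum.inr ⟨2 * j + 1, by omega⟩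

private lemma adj_AB (m : ℕ) (j : Fin m) :
    (graphJoin (⊤ : SimpleGraph (Fin 1)) (matchingGraph m)).Adj (Av m j) (Bv m j) := by
  simp only [graphJoin, SimpleGraph.fromRel_adj, Av, Bv]
  refine ⟨by simp only [ne_eq, Sum.inr.injEq, Fin.mk.injEq]; omega,
    Or.inl (Or.inr (Or.inr ⟨_, _, rfl, rfl, ?_⟩))⟩
  simp only [matchingGraph, SimpleGraph.fromRel_adj]
  refine ⟨by simp only [ne_eq, Fin.mk.injEq]; omega, Or.inl ?_⟩
  omega

private lemma adj_C (m : ℕ) (x : Fin (2 * m)) :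
    (graphJoin (⊤ : SimpleGraph (Fin 1)) (matchingGraph m)).Adj (Sum.inl 0) (Sum.inr x) := by
  simp only [graphJoin, SimpleGraph.fromRel_adj]
  exact ⟨by simp, Or.inl (Or.inl ⟨0, x, rfl, rfl⟩)⟩

/-- Let `m ≥ 1`, let `F_m = K₁ ∇ M_m` be the friendship graph, and let
`F_m^o` be an odd-ballooning of `F_m` with every substituted odd cycle of length at
least five.  Then for every `n ≥ m`, the graph `K_m ∇ T_{n-m, 2}` contains no subgraph
isomorphic to `F_m^o`. -/
theorem stmt_17 {β : Type} [Fintype β] (m : ℕ) (hm : 1 ≤ m)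
    (Fo : SimpleGraph β)
    (hFo : IsOddBallooning (graphJoin (⊤ : SimpleGraph (Fin 1)) (matchingGraph m)) Fo) :
    ∀ n : ℕ, m ≤ n →
      IsFreeOf Fo (graphJoin (⊤ : SimpleGraph (Fin m))
        (SimpleGraph.turanGraph (n - m) 2)) := by
  
  classical
  intro n hn hcon
  obtain ⟨g, hg⟩ := hcon
  obtain ⟨f, P, hadj, hpath, hlen, hsymm, hsup, hdisj, hcover, hedge⟩ := hFo
  let hom : Fo →g graphJoin (⊤ : SimpleGraph (Fin m)) (SimpleGraph.turanGraph (n - m) 2) :=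
    ⟨fun x => g x, fun {a b} h => hg h⟩
  -- the 2-coloring of the target
  obtain ⟨χ, hχr⟩ : ∃ χ : Fin m ⊕ Fin (n - m) → ZMod 2,
      ∀ v : Fin (n - m), χ (Sum.inr v) = ((v : ℕ) : ZMod 2) :=
    ⟨Sum.elim (fun _ => 0) (fun v => ((v : ℕ) : ZMod 2)), fun _ => rfl⟩
  -- Claim A: every substituted cycle must visit the `Fin m` (clique) part
  have claimA : ∀ (u v : Fin 1 ⊕ Fin (2 * m))
      (h : (graphJoin (⊤ : SimpleGraph (Fin 1)) (matchingGraph m)).Adj u v),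
      ∃ k : Fin m, ∃ b ∈ (P u v h).support, g b = Sum.inl k := by
    intro u v h
    by_contra hno
    push_neg at hno
    set W : Fo.Walk (f u) (f u) := SimpleGraph.Walk.cons (hadj u v h) (P u v h) with hW
    have hsupW : ∀ b ∈ W.support, b ∈ (P u v h).support := by
      intro b hb
      rw [hW, SimpleGraph.Walk.support_cons, List.mem_cons] at hb
      rcases hb with rfl | hb
      · exact (P u v h).end_mem_support
      · exact hb
    have hmap : ∀ x ∈ (W.map hom).support, ∃ a : Fin (n - m), x = Sum.inr a := by
      intro x hx
      rw [SimpleGraph.Walk.support_map, List.mem_map] at hx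
      obtain ⟨b, hb, rfl⟩ := hx
      show ∃ a, g b = Sum.inr a
      cases hgb : g b with
      | inl k => exact absurd hgb (hno k b (hsupW b hb))
      | inr a => exact ⟨a, rfl⟩
    have hedgecol : ∀ a ∈ (W.map hom).support, ∀ b ∈ (W.map hom).support,
        (graphJoin (⊤ : SimpleGraph (Fin m)) (SimpleGraph.turanGraph (n - m) 2)).Adj a b →
          χ a ≠ χ b := by
      intro a ha b hb hab
      obtain ⟨p, rfl⟩ := hmap a ha
      obtain ⟨q, rfl⟩ := hmap b hb
      simp only [graphJoin, SimpleGraph.fromRel_adj, ne_eq, Sum.inr.injEq,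
        reduceCtorEq, false_and, exists_false, and_false, exists_and_left, false_or,
        exists_eq_left', exists_eq_left] at hab
      have hmod : (p : ℕ) % 2 ≠ (q : ℕ) % 2 := by
        rcases hab.2 with h' | h'
        · have : (SimpleGraph.turanGraph (n - m) 2).Adj p q := h'
          simp only [SimpleGraph.turanGraph] at this
          exact_mod_cast this
        · have : (SimpleGraph.turanGraph (n - m) 2).Adj q p := h'
          simp only [SimpleGraph.turanGraph] at this
          have := this
          intro hc
          exact (by exact_mod_cast this : (q : ℕ) % 2 ≠ (p : ℕ) % 2) hc.symm
      rw [hχr, hχr]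
      intro hc
      exact hmod ((ZMod.natCast_eq_natCast_iff' _ _ _).mp hc)
    have hpar := walk_parity χ (W.map hom) hedgecol
    have h0 : (((W.map hom).length : ℕ) : ZMod 2) = 0 := left_eq_add.mp hpar
    rw [SimpleGraph.Walk.length_map, hW, SimpleGraph.Walk.length_cons] at h0
    have hdvd : (2 : ℕ) ∣ ((P u v h).length + 1) :=
      (ZMod.natCast_eq_zero_iff _ 2).mp h0
    obtain ⟨t, ht⟩ := (hlen u v h).2
    omega
  -- the sets of clique vertices on each matching cycle
  obtain ⟨S, hSmem⟩ : ∃ S : Fin m → Finset (Fin m), ∀ j k,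
      k ∈ S j ↔ ∃ b ∈ (P (Av m j) (Bv m j) (adj_AB m j)).support, g b = Sum.inl k :=
    ⟨fun j => Finset.univ.filter
      (fun k => ∃ b ∈ (P (Av m j) (Bv m j) (adj_AB m j)).support, g b = Sum.inl k),
      by intro j k; simp⟩
  have hedgene : ∀ j j' : Fin m, j ≠ j' → s(Av m j, Bv m j) ≠ s(Av m j', Bv m j') := by
    intro j j' hne h
    rw [Sym2.eq_iff] at h
    rcases h with ⟨h1, h2⟩ | ⟨h1, h2⟩ <;>
      (simp only [Av, Bv, Sum.inr.injEq, Fin.mk.injEq] at h1 h2;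
       exact hne (Fin.ext (by omega)))
  have hSdisj : ∀ j ∈ Finset.univ, ∀ j' ∈ (Finset.univ : Finset (Fin m)), j ≠ j' →
      Disjoint (S j) (S j') := by
    intro j _ j' _ hne
    rw [Finset.disjoint_left]
    intro k hk hk'
    rw [hSmem] at hk hk'
    obtain ⟨b, hb, hgb⟩ := hk
    obtain ⟨b2, hb2, hgb2⟩ := hk'
    have hbeq : b2 = b := g.injective (hgb2.trans hgb.symm)
    subst hbeq
    have hrange : b2 ∈ Set.range f :=
      hdisj _ _ _ _ (adj_AB m j) (adj_AB m j') (hedgene j j' hne) b2 hb hb2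
    have h1 := hsup _ _ (adj_AB m j) b2 hb
    have h2 := hsup _ _ (adj_AB m j') b2 hb2
    rcases h1 with h1 | h1 | h1 <;> rcases h2 with h2 | h2 | h2 <;>
      first
      | exact h1 hrange
      | exact h2 hrange
      | (have heq := f.injective (h1.symm.trans h2);
         simp only [Av, Bv, Sum.inr.injEq, Fin.mk.injEq] at heq;
         exact hne (Fin.ext (by omega)))
  have hcard1 : ∀ j : Fin m, 1 ≤ (S j).card := by
    intro j
    obtain ⟨k, b, hb, hgb⟩ := claimA _ _ (adj_AB m j)
    exact Finset.card_pos.mpr ⟨k, (hSmem j k).mpr ⟨b, hb, hgb⟩⟩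
  have hsum : ∑ j, (S j).card = (Finset.univ.biUnion S).card :=
    (Finset.card_biUnion hSdisj).symm
  have hbiU : Finset.univ.biUnion S = Finset.univ := by
    apply Finset.eq_univ_of_card
    refine le_antisymm (by simpa using Finset.card_le_card (Finset.subset_univ (Finset.univ.biUnion S))) ?_
    calc Fintype.card (Fin m) = ∑ _j : Fin m, 1 := by simp
    _ ≤ ∑ j, (S j).card := Finset.sum_le_sum (fun j _ => hcard1 j)
    _ = _ := hsum
  -- the two centre cycles both pin a clique vertex onto the first matching cycle
  have hcenter : ∀ x : Fin (2 * m), (x : ℕ) < 2 →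
      ∃ k ∈ S ⟨0, hm⟩, g (f (Sum.inr x)) = Sum.inl k := by
    intro x hx2
    obtain ⟨k, b, hb, hgb⟩ := claimA _ _ (adj_C m x)
    have hkuniv : k ∈ Finset.univ.biUnion S := by rw [hbiU]; exact Finset.mem_univ k
    obtain ⟨j0, -, hkj0⟩ := Finset.mem_biUnion.mp hkuniv
    obtain ⟨b2, hb2, hgb2⟩ := (hSmem j0 k).mp hkj0
    have hbeq : b2 = b := g.injective (hgb2.trans hgb.symm)
    subst hbeq
    have hene : s((Sum.inl 0 : Fin 1 ⊕ Fin (2 * m)), Sum.inr x) ≠ s(Av m j0, Bv m j0) := by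
      intro hco
      rw [Sym2.eq_iff] at hco
      rcases hco with ⟨h1, -⟩ | ⟨h1, -⟩ <;> simp [Av, Bv] at h1
    have hrange : b2 ∈ Set.range f :=
      hdisj _ _ _ _ (adj_C m x) (adj_AB m j0) hene b2 hb hb2
    have h1 := hsup _ _ (adj_C m x) b2 hb
    have h2 := hsup _ _ (adj_AB m j0) b2 hb2
    rcases h1 with h1 | h1 | h1
    · rcases h2 with h2 | h2 | h2
      · have := f.injective (h1.symm.trans h2); simp [Av] at this
      · have := f.injective (h1.symm.trans h2); simp [Bv] at this
      · exact absurd hrange h2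
    · have hj0 : j0 = ⟨0, hm⟩ := by
        rcases h2 with h2 | h2 | h2
        · have hxx := f.injective (h1.symm.trans h2)
          simp only [Av, Sum.inr.injEq, Fin.ext_iff] at hxx
          exact Fin.ext (show (j0 : ℕ) = 0 by omega)
        · have hxx := f.injective (h1.symm.trans h2)
          simp only [Bv, Sum.inr.injEq, Fin.ext_iff] at hxx
          exact Fin.ext (show (j0 : ℕ) = 0 by omega)
        · exact absurd hrange h2
      exact ⟨k, hj0 ▸ hkj0, h1 ▸ hgb⟩
    · exact absurd hrange h1
  obtain ⟨k0, hk0, hgk0⟩ := hcenter ⟨0, by omega⟩ (by simp)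
  obtain ⟨k1, hk1, hgk1⟩ := hcenter ⟨1, by omega⟩ (by simp)
  have hkne : k0 ≠ k1 := by
    intro h
    have h01 : f (Sum.inr (⟨0, by omega⟩ : Fin (2 * m))) = f (Sum.inr ⟨1, by omega⟩) :=
      g.injective (by rw [hgk0, h, hgk1])
    have := f.injective h01
    simp at this
  have h2card : 2 ≤ (S ⟨0, hm⟩).card := Finset.one_lt_card.mpr ⟨k0, hk0, k1, hk1, hkne⟩
  have hle : (∑ j, (S j).card) ≤ m := by
    rw [hsum, hbiU]; simp
  have hgesplit : (S ⟨0, hm⟩).card + ∑ j ∈ Finset.univ.erase ⟨0, hm⟩, (S j).card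
      = ∑ j, (S j).card :=
    Finset.add_sum_erase Finset.univ (fun j => (S j).card) (Finset.mem_univ (⟨0, hm⟩ : Fin m))
  have herase : (Finset.univ.erase (⟨0, hm⟩ : Fin m)).card
      ≤ ∑ j ∈ Finset.univ.erase ⟨0, hm⟩, (S j).card := by
    calc (Finset.univ.erase (⟨0, hm⟩ : Fin m)).card
        = ∑ _j ∈ Finset.univ.erase (⟨0, hm⟩ : Fin m), 1 := by simp
    _ ≤ _ := Finset.sum_le_sum (fun j _ => hcard1 j)
  have hcarderase : (Finset.univ.erase (⟨0, hm⟩ : Fin m)).card = m - 1 := by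
    rw [Finset.card_erase_of_mem (Finset.mem_univ _)]; simp
  omega
end

section
/- Let F = K_1 ∇ F• where every component of F• is either a non-trivial tree or an even cycle and at least one component of F• is a tree, and let F^o be an odd-ballooning of F in which every substituted odd cycle has length at least five. Then for every n ≥ e(F•), the graph E_{e(F•)} ∇ T_{n−e(F•), 2} contains no subgraph isomorphic to F^o. -/
open SimpleGraph

section StmtAux
open Sum

variable {α β : Type}

lemma gj_inl_inr {G : SimpleGraph α} {H : SimpleGraph β} (a : α) (b : β) :
    (graphJoin G H).Adj (inl a) (inr b) := by
  simp [graphJoin, SimpleGraph.fromRel_adj]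

lemma gj_inr_inr {G : SimpleGraph α} {H : SimpleGraph β} {a b : β} :
    (graphJoin G H).Adj (inr a) (inr b) ↔ H.Adj a b := by
  simp only [graphJoin, SimpleGraph.fromRel_adj]
  constructor
  · rintro ⟨hne, h | h⟩ <;> simp_all
    exact h.symm
  · intro h
    exact ⟨by simp [h.ne], Or.inl (Or.inr (Or.inr ⟨a, b, rfl, rfl, h⟩))⟩

lemma gj_bot_not_inl_inl {γ : Type} {H : SimpleGraph β} {a b : γ} :
    ¬ (graphJoin (⊥ : SimpleGraph γ) H).Adj (inl a) (inl b) := by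
  simp [graphJoin, SimpleGraph.fromRel_adj]

lemma gj_one_not_inl_inl {H : SimpleGraph β} {a b : Fin 1} :
    ¬ (graphJoin (⊤ : SimpleGraph (Fin 1)) H).Adj (inl a) (inl b) := by
  have : a = b := Subsingleton.elim _ _
  subst this
  exact SimpleGraph.irrefl _

/-- colour of a host vertex -/
def hcol {m N : ℕ} : Fin m ⊕ Fin N → ℕ
  | inl _ => 0
  | inr a => (a : ℕ) % 2

lemma host_walk_parity {m N : ℕ} {x y : Fin m ⊕ Fin N}
    (w : (graphJoin (⊥ : SimpleGraph (Fin m)) (turanGraph N 2)).Walk x y)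
    (h : ∀ b ∈ w.support, ∃ a, b = inr a) :
    (hcol x + w.length) % 2 = hcol y % 2 := by
  induction w with
  | nil => simp
  | @cons u v z hadj p ih =>
    have hu : ∃ a, u = inr a := h u (by simp)
    have hv : ∃ a, v = inr a := h v (by simp)
    obtain ⟨a, rfl⟩ := hu
    obtain ⟨b, rfl⟩ := hv
    have hT : (turanGraph N 2).Adj a b := gj_inr_inr.mp hadj
    have hab : (a : ℕ) % 2 ≠ (b : ℕ) % 2 := hT
    have ih' := ih (fun b hb => h b (by simp [hb]))
    have h1 : hcol (inr a : Fin m ⊕ Fin N) = (a : ℕ) % 2 := rfl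
    have h2 : hcol (inr b : Fin m ⊕ Fin N) = (b : ℕ) % 2 := rfl
    simp only [Walk.length_cons] at *
    have ha2 : (a : ℕ) % 2 < 2 := Nat.mod_lt _ (by norm_num)
    have hb2 : (b : ℕ) % 2 < 2 := Nat.mod_lt _ (by norm_num)
    omega

lemma host_no_odd_closed {m N : ℕ} {x : Fin m ⊕ Fin N}
    (w : (graphJoin (⊥ : SimpleGraph (Fin m)) (turanGraph N 2)).Walk x x)
    (hodd : Odd w.length)
    (h : ∀ b ∈ w.support, ∃ a, b = inr a) : False := by
  have := host_walk_parity w h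
  obtain ⟨k, hk⟩ := hodd
  omega

noncomputable def neighbor_equiv (Fd : SimpleGraph α)
    (C : Fd.ConnectedComponent) (v : α) (hv : v ∈ C.supp) :
    Fd.neighborSet v ≃ (Fd.induce C.supp).neighborSet ⟨v, hv⟩ := by
  refine ⟨fun w => ⟨⟨w.1, ?_⟩, ?_⟩, fun w => ⟨w.1.1, w.2⟩, fun w => rfl, fun w => rfl⟩
  · rw [ConnectedComponent.mem_supp_iff] at hv ⊢
    exact (SimpleGraph.ConnectedComponent.connectedComponentMk_eq_of_adj w.2).symm.trans hv
  · exact w.2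

lemma comp_edge_lt [Fintype α] (Fd : SimpleGraph α)
    (hcomp : GoodComponents Fd)
    (htree : ∃ C : Fd.ConnectedComponent, (Fd.induce C.supp).IsTree) :
    Nat.card Fd.edgeSet < Fintype.card α := by
  classical
  have hft : Fintype Fd.ConnectedComponent :=
    Fintype.ofSurjective Fd.connectedComponentMk (fun q => Quot.exists_rep q)
  set sC : Fd.ConnectedComponent → Finset α :=
    fun C => Finset.univ.filter (fun v => Fd.connectedComponentMk v = C) with hsC
  have hcard : ∑ C, (sC C).card = Fintype.card α := by
    rw [← Finset.card_univ]
    exact (Finset.card_eq_sum_card_fiberwise (fun v _ => Finset.mem_univ _)).symm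
  have hdeg : ∑ C, ∑ v ∈ sC C, Fd.degree v = ∑ v, Fd.degree v :=
    Finset.sum_fiberwise_of_maps_to (fun v _ => Finset.mem_univ _) _
  have hsupp : ∀ C : Fd.ConnectedComponent, (sC C).card = Fintype.card C.supp := by
    intro C
    rw [Fintype.card_subtype]
    congr 1
    ext v
    simp [hsC, ConnectedComponent.mem_supp_iff]
  have hCdeg : ∀ C : Fd.ConnectedComponent,
      ∑ v ∈ sC C, Fd.degree v = 2 * (Fd.induce C.supp).edgeFinset.card := by
    intro C
    rw [Finset.sum_subtype (p := fun v => v ∈ C.supp)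
      (F := Subtype.fintype _)
      (sC C) (by intro x; simp [hsC, ConnectedComponent.mem_supp_iff]) (fun v => Fd.degree v)]
    rw [← sum_degrees_eq_twice_card_edges]
    apply Finset.sum_congr rfl
    intro x _
    rw [← card_neighborSet_eq_degree, ← card_neighborSet_eq_degree]
    exact Fintype.card_congr (neighbor_equiv Fd C x.1 x.2)
  have hCb : ∀ C : Fd.ConnectedComponent,
      2 * (Fd.induce C.supp).edgeFinset.card ≤ 2 * (sC C).card := by
    intro C
    rw [hsupp C]
    rcases hcomp C with ⟨ht, _⟩ | ⟨mm, hmm, ⟨iso⟩⟩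
    · have := ht.card_edgeFinset
      omega
    · obtain ⟨k, hk⟩ : ∃ k, 2 * mm = k + 3 := ⟨2 * mm - 3, by omega⟩
      rw [hk] at iso
      have hcards : Fintype.card C.supp = k + 3 := by
        rw [Fintype.card_congr iso.toEquiv, Fintype.card_fin]
      have hedge : (Fd.induce C.supp).edgeFinset.card = (cycleGraph (k + 3)).edgeFinset.card := by
        rw [edgeFinset_card, edgeFinset_card]
        exact Fintype.card_congr iso.mapEdgeSet
      have hcyc : 2 * (cycleGraph (k + 3)).edgeFinset.card = (k + 3) * 2 := by
        rw [← sum_degrees_eq_twice_card_edges]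
        rw [Finset.sum_congr rfl (fun v _ => cycleGraph_degree_three_le)]
        simp [Finset.sum_const, mul_comm]
      omega
  obtain ⟨C0, ht0⟩ := htree
  have hC0 : 2 * (Fd.induce C0.supp).edgeFinset.card < 2 * (sC C0).card := by
    rw [hsupp C0]
    have := ht0.card_edgeFinset
    omega
  have hlt : ∑ C, ∑ v ∈ sC C, Fd.degree v < ∑ C, 2 * (sC C).card := by
    apply Finset.sum_lt_sum (fun C _ => (hCdeg C) ▸ hCb C)
    exact ⟨C0, Finset.mem_univ _, (hCdeg C0) ▸ hC0⟩
  rw [hdeg, sum_degrees_eq_twice_card_edges] at hlt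
  have h5 : ∑ C, 2 * (sC C).card = 2 * Fintype.card α := by
    rw [← Finset.mul_sum, hcard]
  rw [h5] at hlt
  have hN : Nat.card Fd.edgeSet = Fd.edgeFinset.card := by
    rw [Nat.card_eq_fintype_card, edgeFinset_card]
  omega

lemma join_degree_inl [Fintype α] (Fd : SimpleGraph α)
    [Fintype ((graphJoin (⊤ : SimpleGraph (Fin 1)) Fd).neighborSet (inl 0))] :
    (graphJoin (⊤ : SimpleGraph (Fin 1)) Fd).degree (inl 0) = Fintype.card α := by
  classical
  rw [← card_neighborFinset_eq_degree]
  have h : (graphJoin (⊤ : SimpleGraph (Fin 1)) Fd).neighborFinset (inl 0) =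
      Finset.univ.map ⟨Sum.inr, Sum.inr_injective⟩ := by
    ext y
    cases y with
    | inl a =>
      simp only [mem_neighborFinset, Finset.mem_map, Finset.mem_univ,
        Function.Embedding.coeFn_mk]
      constructor
      · intro h; exact absurd h gj_one_not_inl_inl
      · rintro ⟨x, -, hx⟩; exact absurd hx (by simp)
    | inr b =>
      simp only [mem_neighborFinset, Finset.mem_map, Finset.mem_univ,
        Function.Embedding.coeFn_mk]
      exact ⟨fun _ => ⟨b, trivial, rfl⟩, fun _ => gj_inl_inr 0 b⟩
  rw [h, Finset.card_map, Finset.card_univ]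

lemma join_degree_inr [Fintype α] (Fd : SimpleGraph α) (v : α)
    [Fintype ((graphJoin (⊤ : SimpleGraph (Fin 1)) Fd).neighborSet (inr v))]
    [Fintype (Fd.neighborSet v)] :
    (graphJoin (⊤ : SimpleGraph (Fin 1)) Fd).degree (inr v) = Fd.degree v + 1 := by
  classical
  rw [← card_neighborFinset_eq_degree, ← card_neighborFinset_eq_degree]
  have h : (graphJoin (⊤ : SimpleGraph (Fin 1)) Fd).neighborFinset (inr v) =
      insert (Sum.inl 0) ((Fd.neighborFinset v).map ⟨Sum.inr, Sum.inr_injective⟩) := by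
    ext y
    cases y with
    | inl a =>
      simp only [mem_neighborFinset, Finset.mem_insert, Finset.mem_map,
        Function.Embedding.coeFn_mk]
      constructor
      · intro _
        left
        have : a = 0 := Subsingleton.elim _ _
        rw [this]
      · intro _
        have : a = 0 := Subsingleton.elim _ _
        subst this
        exact (gj_inl_inr 0 v).symm
    | inr w =>
      simp only [mem_neighborFinset, Finset.mem_insert, Finset.mem_map,
        Function.Embedding.coeFn_mk, gj_inr_inr]
      constructor
      · intro h; exact Or.inr ⟨w, by simpa [mem_neighborFinset] using h, rfl⟩
      · rintro (h | ⟨x, hx, hxe⟩)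
        · exact absurd h (by simp)
        · obtain rfl : x = w := by simpa using hxe
          simpa [mem_neighborFinset] using hx
  rw [h, Finset.card_insert_of_notMem (by simp), Finset.card_map]

lemma handshake_ncard {γ : Type} [Fintype γ] (G : SimpleGraph γ) [DecidableRel G.Adj] :
    ∑ v, G.degree v = 2 * Nat.card G.edgeSet := by
  rw [sum_degrees_eq_twice_card_edges, edgeFinset_card, ← Nat.card_eq_fintype_card]

lemma join_edge_card [Fintype α] (Fd : SimpleGraph α) :
    Nat.card (graphJoin (⊤ : SimpleGraph (Fin 1)) Fd).edgeSet
      = Fintype.card α + Nat.card Fd.edgeSet := by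
  classical
  have h2 := handshake_ncard (graphJoin (⊤ : SimpleGraph (Fin 1)) Fd)
  rw [Fintype.sum_sum_type] at h2
  rw [Fin.sum_univ_one] at h2
  rw [join_degree_inl Fd] at h2
  have h3 : ∑ v : α, (graphJoin (⊤ : SimpleGraph (Fin 1)) Fd).degree (inr v)
      = ∑ v : α, (Fd.degree v + 1) :=
    Finset.sum_congr rfl (fun v _ => join_degree_inr Fd v)
  rw [h3, Finset.sum_add_distrib, handshake_ncard Fd,
    Finset.sum_const, smul_eq_mul, mul_one, Finset.card_univ] at h2
  omega

end StmtAux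

/-- Let `F = K₁ ∇ F•` where every component of `F•` is a non-trivial
tree or an even cycle and at least one component of `F•` is a tree, and let `F^o` be an
odd-ballooning of `F` with every substituted odd cycle of length at least five.  Then
for every `n ≥ e(F•)`, the graph `E_{e(F•)} ∇ T_{n-e(F•), 2}` contains no subgraph
isomorphic to `F^o`. -/

theorem stmt_18 {α β : Type} [Fintype α] [Fintype β] [Nonempty α]
    (Fdot : SimpleGraph α) (hcomp : GoodComponents Fdot)
    (htree : ∃ C : Fdot.ConnectedComponent, (Fdot.induce C.supp).IsTree)
    (Fo : SimpleGraph β)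
    (hFo : IsOddBallooning (graphJoin (⊤ : SimpleGraph (Fin 1)) Fdot) Fo) :
    ∀ n : ℕ, eCount Fdot ≤ n →
      IsFreeOf Fo (graphJoin (⊥ : SimpleGraph (Fin (eCount Fdot)))
        (SimpleGraph.turanGraph (n - eCount Fdot) 2)) := by
  classical
  intro n hn hcc
  obtain ⟨g, hg⟩ := hcc
  obtain ⟨f, P, hadj, hpath, hlen, hrev, hsupp_range, hdisj, hcover, hedges⟩ := hFo
  -- the graph homomorphism associated to the copy
  let gh : Fo →g (graphJoin (⊥ : SimpleGraph (Fin (eCount Fdot)))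
      (SimpleGraph.turanGraph (n - (eCount Fdot)) 2)) := ⟨(g : β → _), fun {a b} hab => hg hab⟩
  -- Step 1: every substituted odd cycle hits the independent part
  have hits : ∀ u v (h : (graphJoin (⊤ : SimpleGraph (Fin 1)) Fdot).Adj u v),
      ∃ b ∈ (P u v h).support, ∃ w : Fin (eCount Fdot), g b = Sum.inl w := by
    intro u v h
    by_contra hnot
    push_neg at hnot
    refine host_no_odd_closed ((Walk.cons (hadj u v h) (P u v h)).map gh) ?_ ?_
    · rw [Walk.length_map, Walk.length_cons]
      exact (hlen u v h).2.add_one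
    · intro b hb
      rw [Walk.support_map, List.mem_map] at hb
      obtain ⟨c, hc, rfl⟩ := hb
      rw [Walk.support_cons, List.mem_cons] at hc
      have hc' : c ∈ (P u v h).support := by
        rcases hc with rfl | hc
        · exact Walk.end_mem_support _
        · exact hc
      have := hnot c hc'
      match hgb : g c with
      | Sum.inl w => exact absurd hgb (this w)
      | Sum.inr a => exact ⟨a, rfl⟩
  -- choice of a crossing vertex for each edge of F
  have key : ∀ e : Sym2 (Fin 1 ⊕ α), e ∈ (graphJoin (⊤ : SimpleGraph (Fin 1)) Fdot).edgeSet →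
      ∃ (p : (Fin 1 ⊕ α) × (Fin 1 ⊕ α)) (b : β) (w : Fin (eCount Fdot)),
        e = s(p.1, p.2) ∧ ∃ h : (graphJoin (⊤ : SimpleGraph (Fin 1)) Fdot).Adj p.1 p.2,
          b ∈ (P p.1 p.2 h).support ∧ g b = Sum.inl w := by
    intro e
    induction e using Sym2.ind with
    | _ u v =>
      intro he
      rw [SimpleGraph.mem_edgeSet] at he
      obtain ⟨b, hb, w, hw⟩ := hits u v he
      exact ⟨(u, v), b, w, rfl, he, hb, hw⟩
  choose pr pb pw heq hA hmem hgw using key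
  set D := (graphJoin (⊤ : SimpleGraph (Fin 1)) Fdot).edgeFinset.attach with hD
  set Φ : {e // e ∈ (graphJoin (⊤ : SimpleGraph (Fin 1)) Fdot).edgeFinset} → Fin (eCount Fdot) :=
    fun e => pw e.1 (SimpleGraph.mem_edgeFinset.mp e.2) with hΦ
  have hfib : D.card = ∑ w : Fin (eCount Fdot), (D.filter (fun e => Φ e = w)).card :=
    Finset.card_eq_sum_card_fiberwise (fun x _ => Finset.mem_univ _)
  -- fiber bounds
  have hone : ∀ w : Fin (eCount Fdot), (¬ ∃ x : Fin 1 ⊕ α, g (f x) = Sum.inl w) →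
      (D.filter (fun e => Φ e = w)).card ≤ 1 := by
    intro w hw
    apply Finset.card_le_one.mpr
    intro e1 h1 e2 h2
    rw [Finset.mem_filter] at h1 h2
    by_contra hne
    have hne' : e1.1 ≠ e2.1 := fun hh => hne (Subtype.ext hh)
    have he1 := SimpleGraph.mem_edgeFinset.mp e1.2
    have he2 := SimpleGraph.mem_edgeFinset.mp e2.2
    have hg1 : g (pb e1.1 he1) = Sum.inl w := by
      rw [hgw]; exact congrArg Sum.inl h1.2
    have hg2 : g (pb e2.1 he2) = Sum.inl w := by
      rw [hgw]; exact congrArg Sum.inl h2.2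
    have hb12 : pb e1.1 he1 = pb e2.1 he2 := g.injective (hg1.trans hg2.symm)
    have hrange := hdisj (pr e1.1 he1).1 (pr e1.1 he1).2 (pr e2.1 he2).1 (pr e2.1 he2).2
      (hA e1.1 he1) (hA e2.1 he2)
      (by rw [← heq e1.1 he1, ← heq e2.1 he2]; exact hne')
      (pb e1.1 he1) (hmem e1.1 he1) (hb12 ▸ hmem e2.1 he2)
    obtain ⟨x, hx⟩ := hrange
    exact hw ⟨x, by rw [hx]; exact hg1⟩
  have hdegb : ∀ w : Fin (eCount Fdot), ∀ x, g (f x) = Sum.inl w →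
      (D.filter (fun e => Φ e = w)).card ≤
        (graphJoin (⊤ : SimpleGraph (Fin 1)) Fdot).degree x := by
    intro w x hx
    rw [← SimpleGraph.card_incidenceFinset_eq_degree]
    apply Finset.card_le_card_of_injOn (fun e => e.1)
    · intro e he
      simp only [Finset.mem_coe, Finset.mem_filter] at he ⊢
      have hee := SimpleGraph.mem_edgeFinset.mp e.2
      have hb : pb e.1 hee = f x := by
        apply g.injective
        rw [hgw, hx]
        exact congrArg Sum.inl he.2
      have h5 := hsupp_range (pr e.1 hee).1 (pr e.1 hee).2 (hA e.1 hee)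
        (pb e.1 hee) (hmem e.1 hee)
      rw [hb] at h5
      have hxuv : x = (pr e.1 hee).1 ∨ x = (pr e.1 hee).2 := by
        rcases h5 with h | h | h
        · exact Or.inl (f.injective h)
        · exact Or.inr (f.injective h)
        · exact absurd ⟨x, rfl⟩ h
      rw [SimpleGraph.mem_incidenceFinset]
      refine ⟨hee, ?_⟩
      rw [heq e.1 hee]
      rcases hxuv with rfl | rfl
      · exact Sym2.mem_mk_left _ _
      · exact Sym2.mem_mk_right _ _
    · intro e1 _ e2 _ hh
      exact Subtype.ext hh
  -- sum decomposition
  have hsplit := Finset.sum_filter_add_sum_filter_not Finset.univ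
    (fun w : Fin (eCount Fdot) => ∃ x, g (f x) = Sum.inl w)
    (fun w => (D.filter (fun e => Φ e = w)).card)
  set B := Finset.univ.filter (fun w : Fin (eCount Fdot) => ∃ x, g (f x) = Sum.inl w) with hB
  set Bc := Finset.univ.filter (fun w : Fin (eCount Fdot) => ¬ ∃ x, g (f x) = Sum.inl w) with hBc
  have hBBc : B.card + Bc.card = (eCount Fdot) := by
    rw [hB, hBc, Finset.card_filter_add_card_filter_not, Finset.card_univ,
      Fintype.card_fin]
  have hBcb : ∑ w ∈ Bc, (D.filter (fun e => Φ e = w)).card ≤ Bc.card := by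
    calc ∑ w ∈ Bc, (D.filter (fun e => Φ e = w)).card
        ≤ ∑ w ∈ Bc, 1 := by
          apply Finset.sum_le_sum
          intro w hw
          rw [hBc, Finset.mem_filter] at hw
          exact hone w hw.2
      _ = Bc.card := by simp
  -- total edge count of F
  have hFe : (graphJoin (⊤ : SimpleGraph (Fin 1)) Fdot).edgeFinset.card
      = Fintype.card α + (eCount Fdot) := by
    have h1 : (graphJoin (⊤ : SimpleGraph (Fin 1)) Fdot).edgeFinset.card
        = Nat.card (graphJoin (⊤ : SimpleGraph (Fin 1)) Fdot).edgeSet := by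
      rw [edgeFinset_card, ← Nat.card_eq_fintype_card]
    rw [h1, join_edge_card Fdot]
    rfl
  have hDcard : D.card = Fintype.card α + (eCount Fdot) := by
    rw [hD, Finset.card_attach, hFe]
  -- case analysis on the image of the apex
  by_cases hz : ∃ w0 : Fin (eCount Fdot), g (f (Sum.inl 0)) = Sum.inl w0
  · obtain ⟨w0, hw0⟩ := hz
    have honly : ∀ x w, g (f x) = Sum.inl w → x = Sum.inl 0 := by
      intro x w hx
      cases x with
      | inl a => rw [Subsingleton.elim a 0]
      | inr v =>
        exfalso
        have h1 : (graphJoin (⊤ : SimpleGraph (Fin 1)) Fdot).Adj (Sum.inl 0) (Sum.inr v) :=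
          gj_inl_inr 0 v
        have h2 := hg (hadj _ _ h1)
        rw [hw0, hx] at h2
        exact gj_bot_not_inl_inl h2
    have hBsub : B ⊆ {w0} := by
      intro w hwmem
      rw [hB, Finset.mem_filter] at hwmem
      obtain ⟨-, x, hx⟩ := hwmem
      have hx0 := honly x w hx
      subst hx0
      rw [Finset.mem_singleton]
      exact (Sum.inl_injective (hw0.symm.trans hx)).symm
    have hw0B : w0 ∈ B := by
      rw [hB, Finset.mem_filter]
      exact ⟨Finset.mem_univ _, Sum.inl 0, hw0⟩
    have hBb : ∑ w ∈ B, (D.filter (fun e => Φ e = w)).card ≤ Fintype.card α := by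
      calc ∑ w ∈ B, (D.filter (fun e => Φ e = w)).card
          ≤ ∑ w ∈ {w0}, (D.filter (fun e => Φ e = w)).card :=
            Finset.sum_le_sum_of_subset hBsub
        _ = (D.filter (fun e => Φ e = w0)).card := Finset.sum_singleton _ _
        _ ≤ (graphJoin (⊤ : SimpleGraph (Fin 1)) Fdot).degree (Sum.inl 0) :=
            hdegb w0 (Sum.inl 0) hw0
        _ = Fintype.card α := join_degree_inl Fdot
    have hBpos : 1 ≤ B.card := Finset.card_pos.mpr ⟨w0, hw0B⟩
    rw [hfib, ← hsplit] at hDcard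
    omega
  · -- the apex avoids the independent part
    have hxv : ∀ w : Fin (eCount Fdot), (∃ x, g (f x) = Sum.inl w) →
        ∃ v : α, g (f (Sum.inr v)) = Sum.inl w := by
      rintro w ⟨x, hx⟩
      cases x with
      | inl a =>
        exfalso
        have ha : a = 0 := Subsingleton.elim _ _
        subst ha
        exact hz ⟨w, hx⟩
      | inr v => exact ⟨v, hx⟩
    have hxv' : ∀ w : Fin (eCount Fdot), ∃ v : α,
        (∃ x, g (f x) = Sum.inl w) → g (f (Sum.inr v)) = Sum.inl w := by
      intro w
      by_cases hw : ∃ x, g (f x) = Sum.inl w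
      · obtain ⟨v, hv⟩ := hxv w hw
        exact ⟨v, fun _ => hv⟩
      · exact ⟨Classical.arbitrary α, fun hc => absurd hc hw⟩
    choose vf hvf using hxv'
    have hvfB : ∀ w ∈ B, g (f (Sum.inr (vf w))) = Sum.inl w := by
      intro w hw
      rw [hB, Finset.mem_filter] at hw
      exact hvf w hw.2
    have hBb : ∑ w ∈ B, (D.filter (fun e => Φ e = w)).card
        ≤ (∑ w ∈ B, Fdot.degree (vf w)) + B.card := by
      calc ∑ w ∈ B, (D.filter (fun e => Φ e = w)).card
          ≤ ∑ w ∈ B, (Fdot.degree (vf w) + 1) := by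
            apply Finset.sum_le_sum
            intro w hw
            have h1 := hdegb w (Sum.inr (vf w)) (hvfB w hw)
            rwa [join_degree_inr Fdot (vf w)] at h1
        _ = (∑ w ∈ B, Fdot.degree (vf w)) + B.card := by
            rw [Finset.sum_add_distrib, Finset.sum_const, smul_eq_mul, mul_one]
    -- so |α| ≤ ∑ deg over the independent image
    have hαle : Fintype.card α ≤ ∑ w ∈ B, Fdot.degree (vf w) := by
      rw [hfib, ← hsplit] at hDcard
      omega
    -- reindex over the image
    have hinj : ∀ x ∈ B, ∀ y ∈ B, vf x = vf y → x = y := by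
      intro x hx y hy hxy
      have h1 := hvfB x hx
      have h2 := hvfB y hy
      rw [hxy] at h1
      exact Sum.inl_injective (h1.symm.trans h2)
    have hsumS : ∑ v ∈ B.image vf, Fdot.degree v = ∑ w ∈ B, Fdot.degree (vf w) :=
      Finset.sum_image hinj
    -- independence of the image
    have hind : ∀ u ∈ B.image vf, ∀ v ∈ B.image vf, ¬ Fdot.Adj u v := by
      intro u hu v hv hadj'
      rw [Finset.mem_image] at hu hv
      obtain ⟨w1, hw1, rfl⟩ := hu
      obtain ⟨w2, hw2, rfl⟩ := hv
      have h1 : (graphJoin (⊤ : SimpleGraph (Fin 1)) Fdot).Adj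
          (Sum.inr (vf w1)) (Sum.inr (vf w2)) := gj_inr_inr.mpr hadj'
      have h2 := hg (hadj _ _ h1)
      rw [hvfB w1 hw1, hvfB w2 hw2] at h2
      exact gj_bot_not_inl_inl h2
    -- the degree sum over an independent set is at most the number of edges
    have hSe : ∑ v ∈ B.image vf, Fdot.degree v ≤ Fdot.edgeFinset.card := by
      have hdd : ∀ v ∈ B.image vf, Fdot.degree v = (Fdot.incidenceFinset v).card :=
        fun v _ => (Fdot.card_incidenceFinset_eq_degree v).symm
      rw [Finset.sum_congr rfl hdd]
      rw [← Finset.card_biUnion ?disj]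
      · apply Finset.card_le_card
        intro e he
        rw [Finset.mem_biUnion] at he
        obtain ⟨v, -, he⟩ := he
        rw [SimpleGraph.mem_incidenceFinset] at he
        exact SimpleGraph.mem_edgeFinset.mpr he.1
      case disj =>
        intro u hu v hv huv
        rw [Function.onFun, Finset.disjoint_left]
        intro e heu hev
        rw [SimpleGraph.mem_incidenceFinset] at heu hev
        have hee : e = s(u, v) := (Sym2.mem_and_mem_iff huv).mp ⟨heu.2, hev.2⟩
        rw [hee] at heu
        exact hind u hu v hv heu.1
    -- contradiction with the structure of Fdot
    have hlt := comp_edge_lt Fdot hcomp htree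
    have hNe : Nat.card Fdot.edgeSet = Fdot.edgeFinset.card := by
      rw [Nat.card_eq_fintype_card, edgeFinset_card]
    omega
end
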